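/- arXiv:1409.6087 — 8 statements merged into one kernel-verified Lean document; each statement's English description precedes it below -/
import Mathlib

section
/- Given a nowhere-zero Z_2-flow φ' with entries in {-1,0,1} for each of r layers (i.e., for each k, Σ_i ∂_{ij} φ'_{ik} = 0 in Z for every row j), the vector y with y_i = Σ_{k=1}^r φ'_{ik} 2^{k-1} satisfies ∂y ≡ 0 (mod 2^r), and y_i ≡ 0 (mod 2^r) implies φ'_{ik} = 0 for all k. -/
open Matrix

lemma aux_binary (r : ℕ) : ∀ (ε : ℕ → ℤ), (∀ k, ε k = -1 ∨ ε k = 0 ∨ ε k = 1) →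
    ∑ k ∈ Finset.range r, ε k * 2 ^ k = 0 → ∀ k < r, ε k = 0 := by
  induction r with
  | zero => intro ε _ _ k hk; omega
  | succ r ih =>
    intro ε hval hsum k hk
    rw [Finset.sum_range_succ'] at hsum
    have hS : ∑ i ∈ Finset.range r, ε (i + 1) * 2 ^ (i + 1)
        = 2 * ∑ i ∈ Finset.range r, ε (i + 1) * 2 ^ i := by
      rw [Finset.mul_sum]; exact Finset.sum_congr rfl fun i _ => by ring
    rw [hS] at hsum
    generalize hSdef : ∑ i ∈ Finset.range r, ε (i + 1) * 2 ^ i = S at hsum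
    have h0 : ε 0 = 0 ∧ S = 0 := by
      simp only [pow_zero, mul_one] at hsum
      rcases hval 0 with h | h | h <;> omega
    rcases Nat.eq_zero_or_pos k with rfl | hkpos
    · exact h0.1
    · obtain ⟨m, rfl⟩ := Nat.exists_eq_add_of_lt hkpos
      have hsum' : ∑ i ∈ Finset.range r, ε (i + 1) * 2 ^ i = 0 := hSdef.trans h0.2
      simpa using ih (fun i => ε (i + 1)) (fun i => hval (i + 1)) hsum' m (by omega)

/-- Let `∂` be an integer matrix with `n` columns.  Suppose each layer
`φ' · k` has entries in `{-1,0,1}`, is nowhere zero as a `ℤ₂^r`-vector (for each `i`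
some layer is nonzero), and satisfies `∑ i ∂_{j i} φ'_{i k} = 0` over `ℤ` for every row
`j`.  Then `y` with `y i = ∑ k φ'_{i k} 2^k` satisfies `∂ y ≡ 0 (mod 2^r)`, and
`y i ≡ 0 (mod 2^r)` forces `φ'_{i k} = 0` for all `k`. -/
theorem stmt1 {J : Type} [Fintype J] (n r : ℕ) (bdry : Matrix J (Fin n) ℤ)
    (φ' : Fin n → Fin r → ℤ)
    (hval : ∀ i k, φ' i k = -1 ∨ φ' i k = 0 ∨ φ' i k = 1)
    (hnz : ∀ i, ∃ k, φ' i k ≠ 0)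
    (hflow : ∀ k : Fin r, bdry.mulVec (fun i => φ' i k) = 0)
    (y : Fin n → ℤ) (hy : ∀ i, y i = ∑ k : Fin r, φ' i k * 2 ^ (k : ℕ)) :
    ((bdry.map (Int.cast : ℤ → ZMod (2 ^ r))).mulVec (fun i => ((y i : ℤ) : ZMod (2 ^ r))) = 0)
      ∧ ∀ i, ((y i : ℤ) : ZMod (2 ^ r)) = 0 → ∀ k, φ' i k = 0 := by
  have hmv : bdry.mulVec y = 0 := by
    funext j
    have hfl : ∀ k : Fin r, ∑ i, bdry j i * φ' i k = 0 := fun k => congrFun (hflow k) j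
    simp only [mulVec, dotProduct, Pi.zero_apply]
    calc ∑ i, bdry j i * y i
        = ∑ i, ∑ k : Fin r, bdry j i * (φ' i k * 2 ^ (k : ℕ)) := by
          refine Finset.sum_congr rfl fun i _ => ?_
          rw [hy i, Finset.mul_sum]
      _ = ∑ k : Fin r, ∑ i, bdry j i * (φ' i k * 2 ^ (k : ℕ)) := Finset.sum_comm
      _ = ∑ k : Fin r, (∑ i, bdry j i * φ' i k) * 2 ^ (k : ℕ) := by
          refine Finset.sum_congr rfl fun k _ => ?_
          rw [Finset.sum_mul]
          exact Finset.sum_congr rfl fun i _ => by ring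
      _ = 0 := by simp [hfl]
  constructor
  · funext j
    have hj := congrFun hmv j
    simp only [mulVec, dotProduct, map_apply, Pi.zero_apply] at hj ⊢
    calc ∑ i, ((bdry j i : ZMod (2^r)) * ((y i : ℤ) : ZMod (2^r)))
        = ((∑ i, bdry j i * y i : ℤ) : ZMod (2^r)) := by push_cast; ring
      _ = 0 := by rw [hj]; simp
  · intro i hyi k
    have hdvd : ((2:ℤ) ^ r) ∣ y i := by
      have := (ZMod.intCast_zmod_eq_zero_iff_dvd (y i) (2 ^ r)).mp hyi
      simpa using this
    have hbound : |y i| < 2 ^ r := by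
      rw [hy i]
      calc |∑ k : Fin r, φ' i k * 2 ^ (k : ℕ)|
          ≤ ∑ k : Fin r, |φ' i k * 2 ^ (k : ℕ)| := Finset.abs_sum_le_sum_abs _ _
        _ ≤ ∑ k : Fin r, 2 ^ (k : ℕ) := by
            refine Finset.sum_le_sum fun m _ => ?_
            rw [abs_mul]
            have h1 : |φ' i m| ≤ 1 := by rcases hval i m with h|h|h <;> simp [h]
            calc |φ' i m| * |(2:ℤ) ^ (m:ℕ)| ≤ 1 * |(2:ℤ) ^ (m:ℕ)| :=
                  mul_le_mul_of_nonneg_right h1 (abs_nonneg _)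
              _ = 2 ^ (m:ℕ) := by rw [one_mul, abs_of_nonneg (by positivity)]
        _ = ∑ m ∈ Finset.range r, (2:ℤ) ^ m := Fin.sum_univ_eq_sum_range _ r
        _ < 2 ^ r := by
            have hg : (∑ m ∈ Finset.range r, (2:ℤ) ^ m) * (2 - 1) = 2 ^ r - 1 :=
              geom_sum_mul 2 r
            have hp : (0:ℤ) < 2 ^ r := by positivity
            nlinarith
    have hy0 : y i = 0 := by
      by_contra h
      have := Int.le_of_dvd (abs_pos.mpr h) ((dvd_abs _ _).mpr hdvd)
      omega
    have key := aux_binary r (fun m => if h : m < r then φ' i ⟨m, h⟩ else 0)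
      (fun m => by
        by_cases h : m < r
        · simpa [h] using hval i ⟨m, h⟩
        · simp [h])
      (by
        rw [← Fin.sum_univ_eq_sum_range (fun m => (if h : m < r then φ' i ⟨m, h⟩ else 0) * 2 ^ m) r]
        rw [← hy0, hy i]
        exact Finset.sum_congr rfl fun m _ => by simp [m.isLt]) k.1 k.2
    simpa [k.2] using key
end

section
/- The number of nowhere-zero modular q-flows of a simplicial complex Δ equals the number of nowhere-zero modular q-flows of its suspension ΣΔ: Φ_Δ(q) = Φ_{ΣΔ}(q). -/
open Matrix

def csign {n : ℕ} (s r : Finset (Fin n)) : ℤ :=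
  if r ⊆ s then (s \ r).sum (fun v => (-1 : ℤ) ^ ((s.filter (fun w => w < v)).card)) else 0

def kbnd {m : ℕ} (K : Finset (Finset (Fin m))) (k : ℕ) :
    Matrix {r : Finset (Fin m) // r ∈ K ∧ r.card = k - 1}
      {s : Finset (Fin m) // s ∈ K ∧ s.card = k} ℤ :=
  fun r s => csign s.1 r.1

noncomputable def kFlowCount {m : ℕ} (K : Finset (Finset (Fin m))) (d q : ℕ) : ℕ :=
  Nat.card {φ : {s : Finset (Fin m) // s ∈ K ∧ s.card = d + 1} → ZMod q //
    ((kbnd K (d + 1)).map (Int.cast : ℤ → ZMod q)).mulVec φ = 0 ∧ ∀ s, φ s ≠ 0}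

/-- Inclusion of the old vertices into the vertex set of the suspension. -/
def upSimp {m : ℕ} (s : Finset (Fin m)) : Finset (Fin (m + 2)) :=
  s.image (Fin.castLE (by omega))

/-- The suspension `ΣΔ`: simplices are `s`, `s ∪ {t}` and `s ∪ {b}` for simplices `s`
of `Δ`, where `t, b` are the two new suspension vertices. -/
def suspCx {m : ℕ} (K : Finset (Finset (Fin m))) : Finset (Finset (Fin (m + 2))) :=
  K.image upSimp ∪
    K.image (fun s => insert (⟨m, by omega⟩ : Fin (m + 2)) (upSimp s)) ∪
    K.image (fun s => insert (⟨m + 1, by omega⟩ : Fin (m + 2)) (upSimp s))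

namespace Stmt2Aux

variable {m : ℕ}

/-- top vertex -/
def tV : Fin (m + 2) := ⟨m, by omega⟩
/-- bottom vertex -/
def bV : Fin (m + 2) := ⟨m + 1, by omega⟩

lemma castLE_inj : Function.Injective (Fin.castLE (by omega : m ≤ m + 2)) :=
  Fin.castLE_injective _

lemma mem_up {i : Fin m} {s : Finset (Fin m)} :
    Fin.castLE (by omega) i ∈ upSimp s ↔ i ∈ s := by
  unfold upSimp
  constructor
  · intro h
    rcases Finset.mem_image.1 h with ⟨j, hj, hji⟩
    rwa [← castLE_inj hji]
  · intro h; exact Finset.mem_image_of_mem _ h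

lemma up_val_lt {x : Fin (m + 2)} {s : Finset (Fin m)} (hx : x ∈ upSimp s) : (x : ℕ) < m := by
  rcases Finset.mem_image.1 hx with ⟨j, _, rfl⟩
  exact j.2

lemma notMem_up {x : Fin (m + 2)} (hx : m ≤ (x : ℕ)) (s : Finset (Fin m)) : x ∉ upSimp s :=
  fun h => absurd (up_val_lt h) (by omega)

lemma tV_notMem_up (s : Finset (Fin m)) : tV ∉ upSimp s := notMem_up le_rfl s
lemma bV_notMem_up (s : Finset (Fin m)) : bV ∉ upSimp s := notMem_up (by simp [bV]) s

lemma card_up (s : Finset (Fin m)) : (upSimp s).card = s.card :=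
  Finset.card_image_of_injective _ castLE_inj

lemma up_subset_up {r s : Finset (Fin m)} : upSimp r ⊆ upSimp s ↔ r ⊆ s := by
  constructor
  · intro h i hi
    exact mem_up.1 (h (mem_up.2 hi))
  · intro h x hx
    rcases Finset.mem_image.1 hx with ⟨j, hj, rfl⟩
    exact mem_up.2 (h hj)

lemma up_inj : Function.Injective (upSimp (m := m)) := fun a b h =>
  Finset.Subset.antisymm (up_subset_up.1 h.le) (up_subset_up.1 h.ge)

def down (s : Finset (Fin (m + 2))) : Finset (Fin m) :=
  Finset.univ.filter (fun i => Fin.castLE (by omega) i ∈ s)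

lemma mem_down {i : Fin m} {s : Finset (Fin (m + 2))} :
    i ∈ down s ↔ Fin.castLE (by omega) i ∈ s := by
  simp [down]

lemma down_up (s : Finset (Fin m)) : down (upSimp s) = s := by
  ext i; simp [mem_down, mem_up]

lemma down_insert {x : Fin (m + 2)} (hx : m ≤ (x : ℕ)) (s : Finset (Fin (m + 2))) :
    down (insert x s) = down s := by
  ext i
  simp only [mem_down, Finset.mem_insert]
  have hne : Fin.castLE (by omega : m ≤ m + 2) i ≠ x := by
    intro h
    have h2 := i.2
    have : ((Fin.castLE (by omega : m ≤ m + 2) i : Fin (m+2)) : ℕ) = (x : ℕ) := by rw [h]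
    simp at this
    omega
  simp [hne]

lemma card_insert_up {x : Fin (m + 2)} (hx : m ≤ (x : ℕ)) (s : Finset (Fin m)) :
    (insert x (upSimp s)).card = s.card + 1 := by
  rw [Finset.card_insert_of_notMem (notMem_up hx s), card_up]


lemma mem_susp_iff {K : Finset (Finset (Fin m))} {s : Finset (Fin (m + 2))} :
    s ∈ suspCx K ↔ (∃ t ∈ K, s = upSimp t) ∨ (∃ t ∈ K, s = insert tV (upSimp t)) ∨
      (∃ t ∈ K, s = insert bV (upSimp t)) := by
  simp only [suspCx, Finset.mem_union, Finset.mem_image, tV, bV]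
  constructor
  · rintro ((⟨t, ht, rfl⟩ | ⟨t, ht, rfl⟩) | ⟨t, ht, rfl⟩)
    · exact Or.inl ⟨t, ht, rfl⟩
    · exact Or.inr (Or.inl ⟨t, ht, rfl⟩)
    · exact Or.inr (Or.inr ⟨t, ht, rfl⟩)
  · rintro (⟨t, ht, rfl⟩ | ⟨t, ht, rfl⟩ | ⟨t, ht, rfl⟩)
    · exact Or.inl (Or.inl ⟨t, ht, rfl⟩)
    · exact Or.inl (Or.inr ⟨t, ht, rfl⟩)
    · exact Or.inr ⟨t, ht, rfl⟩

lemma mem_susp_up {K : Finset (Finset (Fin m))} {t : Finset (Fin m)} (ht : t ∈ K) :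
    upSimp t ∈ suspCx K := mem_susp_iff.2 (Or.inl ⟨t, ht, rfl⟩)

lemma mem_susp_T {K : Finset (Finset (Fin m))} {t : Finset (Fin m)} (ht : t ∈ K) :
    insert tV (upSimp t) ∈ suspCx K := mem_susp_iff.2 (Or.inr (Or.inl ⟨t, ht, rfl⟩))

lemma mem_susp_B {K : Finset (Finset (Fin m))} {t : Finset (Fin m)} (ht : t ∈ K) :
    insert bV (upSimp t) ∈ suspCx K := mem_susp_iff.2 (Or.inr (Or.inr ⟨t, ht, rfl⟩))

/-- Characterization of the top-dimensional cells of the suspension. -/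
lemma colChar {K : Finset (Finset (Fin m))} {d : ℕ} (hdim : ∀ s ∈ K, s.card ≤ d + 1)
    {s : Finset (Fin (m + 2))} (hs : s ∈ suspCx K) (hc : s.card = d + 2) :
    ∃ t ∈ K, t.card = d + 1 ∧ (s = insert tV (upSimp t) ∨ s = insert bV (upSimp t)) := by
  rcases mem_susp_iff.1 hs with ⟨t, ht, rfl⟩ | ⟨t, ht, rfl⟩ | ⟨t, ht, rfl⟩
  · rw [card_up] at hc
    have := hdim t ht; omega
  · refine ⟨t, ht, ?_, Or.inl rfl⟩
    rw [card_insert_up le_rfl] at hc; omega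
  · refine ⟨t, ht, ?_, Or.inr rfl⟩
    rw [card_insert_up (by simp [bV]) t] at hc; omega

/-- Characterization of the codimension-one cells of the suspension. -/
lemma rowChar {K : Finset (Finset (Fin m))} {d : ℕ}
    {s : Finset (Fin (m + 2))} (hs : s ∈ suspCx K) (hc : s.card = d + 1) :
    (∃ t ∈ K, t.card = d + 1 ∧ s = upSimp t) ∨
      (∃ t ∈ K, t.card = d ∧ (s = insert tV (upSimp t) ∨ s = insert bV (upSimp t))) := by
  rcases mem_susp_iff.1 hs with ⟨t, ht, rfl⟩ | ⟨t, ht, rfl⟩ | ⟨t, ht, rfl⟩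
  · rw [card_up] at hc
    exact Or.inl ⟨t, ht, hc, rfl⟩
  · rw [card_insert_up le_rfl] at hc
    exact Or.inr ⟨t, ht, by omega, Or.inl rfl⟩
  · rw [card_insert_up (by simp [bV]) t] at hc
    exact Or.inr ⟨t, ht, by omega, Or.inr rfl⟩


lemma cs_not_subset {r s : Finset (Fin (m + 2))} (h : ¬ r ⊆ s) : csign s r = 0 :=
  if_neg h

lemma lt_of_mem_up {y x : Fin (m + 2)} {s : Finset (Fin m)} (hy : y ∈ upSimp s)
    (hx : m ≤ (x : ℕ)) : y < x := by
  rw [Fin.lt_def]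
  have := up_val_lt hy
  omega

lemma castLE_lt_x {x : Fin (m + 2)} (hx : m ≤ (x : ℕ)) (v : Fin m) :
    Fin.castLE (by omega : m ≤ m + 2) v < x := by
  rw [Fin.lt_def]; simp; omega

lemma not_x_lt_castLE {x : Fin (m + 2)} (hx : m ≤ (x : ℕ)) (v : Fin m) :
    ¬ x < Fin.castLE (by omega : m ≤ m + 2) v := by
  rw [Fin.lt_def]; simp; omega

lemma castLE_lt_castLE {v w : Fin m} :
    Fin.castLE (by omega : m ≤ m + 2) w < Fin.castLE (by omega) v ↔ w < v := by
  simp only [Fin.lt_def, Fin.coe_castLE]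

/-- Diagonal entry: the coefficient of `x ∪ s` on `s`. -/
lemma cs_diag {x : Fin (m + 2)} (hx : m ≤ (x : ℕ)) (s : Finset (Fin m)) :
    csign (insert x (upSimp s)) (upSimp s) = (-1) ^ s.card := by
  unfold csign
  rw [if_pos (Finset.subset_insert _ _)]
  have hd : insert x (upSimp s) \ upSimp s = {x} := by
    ext y
    simp only [Finset.mem_sdiff, Finset.mem_insert, Finset.mem_singleton]
    constructor
    · rintro ⟨h | h, hn⟩
      · exact h
      · exact absurd h hn
    · rintro rfl
      exact ⟨Or.inl rfl, notMem_up hx s⟩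
  rw [hd, Finset.sum_singleton]
  congr 1
  rw [Finset.filter_insert, if_neg (lt_irrefl x),
    Finset.filter_true_of_mem (fun y hy => lt_of_mem_up hy hx), card_up]

/-- Off-diagonal vanishing for equal-cardinality simplices. -/
lemma cs_ne {x : Fin (m + 2)} (hx : m ≤ (x : ℕ)) {r s : Finset (Fin m)}
    (hcard : r.card = s.card) (hne : r ≠ s) :
    csign (insert x (upSimp s)) (upSimp r) = 0 := by
  apply cs_not_subset
  intro hsub
  have hrs : r ⊆ s := by
    intro w hw
    have := hsub (mem_up.2 hw)
    rcases Finset.mem_insert.1 this with h | h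
    · exact absurd (castLE_lt_x hx w) (by rw [h]; exact lt_irrefl x)
    · exact mem_up.1 h
  exact hne (Finset.eq_of_subset_of_card_le hrs (le_of_eq hcard.symm))

/-- The boundary map restricted to cells containing the new vertex is the old boundary. -/
lemma cs_shift {x : Fin (m + 2)} (hx : m ≤ (x : ℕ)) (r s : Finset (Fin m)) :
    csign (insert x (upSimp s)) (insert x (upSimp r)) = csign s r := by
  unfold csign
  by_cases h : r ⊆ s
  · rw [if_pos h, if_pos (Finset.insert_subset_insert _ (up_subset_up.2 h))]
    have hd : insert x (upSimp s) \ insert x (upSimp r) = upSimp (s \ r) := by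
      rw [Finset.insert_sdiff_insert, Finset.sdiff_insert,
        Finset.erase_eq_of_notMem (by simp [notMem_up hx]),
        upSimp, upSimp, upSimp, ← Finset.image_sdiff _ _ castLE_inj]
    rw [hd]
    unfold upSimp
    rw [Finset.sum_image (fun a _ b _ hab => castLE_inj hab)]
    apply Finset.sum_congr rfl
    intro v hv
    congr 1
    rw [Finset.filter_insert, if_neg (not_x_lt_castLE hx v)]
    rw [Finset.filter_image, Finset.card_image_of_injective _ castLE_inj]
    congr 1
  · rw [if_neg h, if_neg]
    intro hsub
    apply h
    intro w hw
    have := hsub (Finset.mem_insert_of_mem (mem_up.2 hw))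
    rcases Finset.mem_insert.1 this with h2 | h2
    · exact absurd (castLE_lt_x hx w) (by rw [h2]; exact lt_irrefl x)
    · exact mem_up.1 h2

lemma tV_ne_bV : (tV : Fin (m + 2)) ≠ bV := by
  simp [tV, bV, Fin.ext_iff]

/-- Cross terms vanish. -/
lemma cs_cross {x y : Fin (m + 2)} (hxy : x ≠ y) (hx : m ≤ (x : ℕ)) (r s : Finset (Fin m)) :
    csign (insert y (upSimp s)) (insert x (upSimp r)) = 0 := by
  apply cs_not_subset
  intro hsub
  have := hsub (Finset.mem_insert_self x _)
  rcases Finset.mem_insert.1 this with h | h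
  · exact hxy h
  · exact notMem_up hx s h


lemma bV_ge : m ≤ ((bV : Fin (m + 2)) : ℕ) := by simp [bV]

section

variable (K : Finset (Finset (Fin m))) (d : ℕ)

/-- The top cone over a facet of `Δ`. -/
def Tcol (t : {s : Finset (Fin m) // s ∈ K ∧ s.card = d + 1}) :
    {s : Finset (Fin (m + 2)) // s ∈ suspCx K ∧ s.card = d + 1 + 1} :=
  ⟨insert tV (upSimp t.1), mem_susp_T t.2.1, by rw [card_insert_up le_rfl, t.2.2]⟩

/-- The bottom cone over a facet of `Δ`. -/
def Bcol (t : {s : Finset (Fin m) // s ∈ K ∧ s.card = d + 1}) :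
    {s : Finset (Fin (m + 2)) // s ∈ suspCx K ∧ s.card = d + 1 + 1} :=
  ⟨insert bV (upSimp t.1), mem_susp_B t.2.1, by rw [card_insert_up bV_ge, t.2.2]⟩

lemma down_mem (hdim : ∀ s ∈ K, s.card ≤ d + 1)
    (s : {s : Finset (Fin (m + 2)) // s ∈ suspCx K ∧ s.card = d + 1 + 1}) :
    down s.1 ∈ K ∧ (down s.1).card = d + 1 := by
  obtain ⟨t, ht, hc, h | h⟩ := colChar hdim s.2.1 s.2.2
  · rw [h, down_insert le_rfl, down_up]; exact ⟨ht, hc⟩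
  · rw [h, down_insert bV_ge, down_up]; exact ⟨ht, hc⟩

/-- The facets of `ΣΔ` are two copies of the facets of `Δ`. -/
def colEquiv (hdim : ∀ s ∈ K, s.card ≤ d + 1) :
    ({s : Finset (Fin m) // s ∈ K ∧ s.card = d + 1} ⊕
        {s : Finset (Fin m) // s ∈ K ∧ s.card = d + 1}) ≃
      {s : Finset (Fin (m + 2)) // s ∈ suspCx K ∧ s.card = d + 1 + 1} where
  toFun := Sum.elim (Tcol K d) (Bcol K d)
  invFun s := if tV ∈ s.1 then Sum.inl ⟨down s.1, down_mem K d hdim s⟩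
    else Sum.inr ⟨down s.1, down_mem K d hdim s⟩
  left_inv := by
    rintro (t | t) <;> dsimp only
    · have h1 : tV ∈ (Sum.elim (Tcol K d) (Bcol K d) (Sum.inl t)).1 :=
        Finset.mem_insert_self _ _
      rw [if_pos h1]
      congr 1
      apply Subtype.ext
      show down (insert tV (upSimp t.1)) = t.1
      rw [down_insert le_rfl, down_up]
    · have h1 : tV ∉ (Sum.elim (Tcol K d) (Bcol K d) (Sum.inr t)).1 := by
        intro h
        rcases Finset.mem_insert.1 h with h | h
        · exact tV_ne_bV h
        · exact tV_notMem_up _ h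
      rw [if_neg h1]
      congr 1
      apply Subtype.ext
      show down (insert bV (upSimp t.1)) = t.1
      rw [down_insert bV_ge, down_up]
  right_inv := by
    intro s
    dsimp only
    obtain ⟨t, ht, hc, h | h⟩ := colChar hdim s.2.1 s.2.2
    · have h1 : tV ∈ s.1 := by rw [h]; exact Finset.mem_insert_self _ _
      rw [if_pos h1]
      apply Subtype.ext
      show insert tV (upSimp (down s.1)) = s.1
      rw [h, down_insert le_rfl, down_up]
    · have h1 : tV ∉ s.1 := by
        rw [h]
        intro hmem
        rcases Finset.mem_insert.1 hmem with h2 | h2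
        · exact tV_ne_bV h2
        · exact tV_notMem_up _ h2
      rw [if_neg h1]
      apply Subtype.ext
      show insert bV (upSimp (down s.1)) = s.1
      rw [h, down_insert bV_ge, down_up]

lemma symm_Tcol (hdim : ∀ s ∈ K, s.card ≤ d + 1)
    (t : {s : Finset (Fin m) // s ∈ K ∧ s.card = d + 1}) :
    (colEquiv K d hdim).symm (Tcol K d t) = Sum.inl t :=
  (colEquiv K d hdim).symm_apply_apply (Sum.inl t)

lemma symm_Bcol (hdim : ∀ s ∈ K, s.card ≤ d + 1)
    (t : {s : Finset (Fin m) // s ∈ K ∧ s.card = d + 1}) :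
    (colEquiv K d hdim).symm (Bcol K d t) = Sum.inr t :=
  (colEquiv K d hdim).symm_apply_apply (Sum.inr t)

lemma sum_split {M : Type*} [AddCommMonoid M] (hdim : ∀ s ∈ K, s.card ≤ d + 1)
    (f : {s : Finset (Fin (m + 2)) // s ∈ suspCx K ∧ s.card = d + 1 + 1} → M) :
    ∑ s, f s = (∑ t, f (Tcol K d t)) + ∑ t, f (Bcol K d t) := by
  rw [← Equiv.sum_comp (colEquiv K d hdim) f, Fintype.sum_sum_type]
  rfl


variable {q : ℕ}

lemma mulVec_apply {n k : ℕ} (K' : Finset (Finset (Fin n)))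
    (v : {s : Finset (Fin n) // s ∈ K' ∧ s.card = k} → ZMod q)
    (r : {r : Finset (Fin n) // r ∈ K' ∧ r.card = k - 1}) :
    ((kbnd K' k).map (Int.cast : ℤ → ZMod q)).mulVec v r
      = ∑ s : {s : Finset (Fin n) // s ∈ K' ∧ s.card = k},
          ((csign s.1 r.1 : ℤ) : ZMod q) * v s := by
  simp [Matrix.mulVec, dotProduct, kbnd, Matrix.map_apply]

lemma rowEval_up (hdim : ∀ s ∈ K, s.card ≤ d + 1)
    (ψ : {s : Finset (Fin (m + 2)) // s ∈ suspCx K ∧ s.card = d + 1 + 1} → ZMod q)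
    (t0 : {s : Finset (Fin m) // s ∈ K ∧ s.card = d + 1}) :
    ∑ s : {s : Finset (Fin (m + 2)) // s ∈ suspCx K ∧ s.card = d + 1 + 1},
        ((csign s.1 (upSimp t0.1) : ℤ) : ZMod q) * ψ s
      = (((-1 : ℤ) ^ (d + 1) : ℤ) : ZMod q) * (ψ (Tcol K d t0) + ψ (Bcol K d t0)) := by
  rw [sum_split K d hdim]
  have hT : ∑ t, ((csign (Tcol K d t).1 (upSimp t0.1) : ℤ) : ZMod q) * ψ (Tcol K d t)
      = (((-1 : ℤ) ^ (d + 1) : ℤ) : ZMod q) * ψ (Tcol K d t0) := by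
    have hz : ∀ t, t ≠ t0 →
        ((csign (Tcol K d t).1 (upSimp t0.1) : ℤ) : ZMod q) * ψ (Tcol K d t) = 0 := by
      intro t ht
      have h0 : csign (Tcol K d t).1 (upSimp t0.1) = 0 := by
        show csign (insert tV (upSimp t.1)) (upSimp t0.1) = 0
        exact cs_ne le_rfl (by rw [t0.2.2, t.2.2]) (fun h => ht (Subtype.ext h.symm))
      rw [h0]; simp
    rw [Fintype.sum_eq_single t0 hz]
    have h0 : csign (Tcol K d t0).1 (upSimp t0.1) = (-1) ^ (d + 1) := by
      show csign (insert tV (upSimp t0.1)) (upSimp t0.1) = _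
      rw [cs_diag le_rfl, t0.2.2]
    rw [h0]
  have hB : ∑ t, ((csign (Bcol K d t).1 (upSimp t0.1) : ℤ) : ZMod q) * ψ (Bcol K d t)
      = (((-1 : ℤ) ^ (d + 1) : ℤ) : ZMod q) * ψ (Bcol K d t0) := by
    have hz : ∀ t, t ≠ t0 →
        ((csign (Bcol K d t).1 (upSimp t0.1) : ℤ) : ZMod q) * ψ (Bcol K d t) = 0 := by
      intro t ht
      have h0 : csign (Bcol K d t).1 (upSimp t0.1) = 0 := by
        show csign (insert bV (upSimp t.1)) (upSimp t0.1) = 0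
        exact cs_ne bV_ge (by rw [t0.2.2, t.2.2]) (fun h => ht (Subtype.ext h.symm))
      rw [h0]; simp
    rw [Fintype.sum_eq_single t0 hz]
    have h0 : csign (Bcol K d t0).1 (upSimp t0.1) = (-1) ^ (d + 1) := by
      show csign (insert bV (upSimp t0.1)) (upSimp t0.1) = _
      rw [cs_diag bV_ge, t0.2.2]
    rw [h0]
  rw [hT, hB, mul_add]

lemma rowEval_T (hdim : ∀ s ∈ K, s.card ≤ d + 1)
    (ψ : {s : Finset (Fin (m + 2)) // s ∈ suspCx K ∧ s.card = d + 1 + 1} → ZMod q)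
    (r0 : Finset (Fin m)) :
    ∑ s : {s : Finset (Fin (m + 2)) // s ∈ suspCx K ∧ s.card = d + 1 + 1},
        ((csign s.1 (insert tV (upSimp r0)) : ℤ) : ZMod q) * ψ s
      = ∑ t : {s : Finset (Fin m) // s ∈ K ∧ s.card = d + 1},
          ((csign t.1 r0 : ℤ) : ZMod q) * ψ (Tcol K d t) := by
  rw [sum_split K d hdim]
  have hB : ∑ t, ((csign (Bcol K d t).1 (insert tV (upSimp r0)) : ℤ) : ZMod q) * ψ (Bcol K d t)
      = 0 := by
    apply Finset.sum_eq_zero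
    intro t _
    have h0 : csign (Bcol K d t).1 (insert tV (upSimp r0)) = 0 := by
      show csign (insert bV (upSimp t.1)) (insert tV (upSimp r0)) = 0
      exact cs_cross tV_ne_bV le_rfl _ _
    rw [h0]; simp
  rw [hB, add_zero]
  apply Finset.sum_congr rfl
  intro t _
  have h0 : csign (Tcol K d t).1 (insert tV (upSimp r0)) = csign t.1 r0 := by
    show csign (insert tV (upSimp t.1)) (insert tV (upSimp r0)) = _
    exact cs_shift le_rfl _ _
  rw [h0]

lemma rowEval_B (hdim : ∀ s ∈ K, s.card ≤ d + 1)
    (ψ : {s : Finset (Fin (m + 2)) // s ∈ suspCx K ∧ s.card = d + 1 + 1} → ZMod q)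
    (r0 : Finset (Fin m)) :
    ∑ s : {s : Finset (Fin (m + 2)) // s ∈ suspCx K ∧ s.card = d + 1 + 1},
        ((csign s.1 (insert bV (upSimp r0)) : ℤ) : ZMod q) * ψ s
      = ∑ t : {s : Finset (Fin m) // s ∈ K ∧ s.card = d + 1},
          ((csign t.1 r0 : ℤ) : ZMod q) * ψ (Bcol K d t) := by
  rw [sum_split K d hdim]
  have hT : ∑ t, ((csign (Tcol K d t).1 (insert bV (upSimp r0)) : ℤ) : ZMod q) * ψ (Tcol K d t)
      = 0 := by
    apply Finset.sum_eq_zero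
    intro t _
    have h0 : csign (Tcol K d t).1 (insert bV (upSimp r0)) = 0 := by
      show csign (insert tV (upSimp t.1)) (insert bV (upSimp r0)) = 0
      exact cs_cross tV_ne_bV.symm bV_ge _ _
    rw [h0]; simp
  rw [hT, zero_add]
  apply Finset.sum_congr rfl
  intro t _
  have h0 : csign (Bcol K d t).1 (insert bV (upSimp r0)) = csign t.1 r0 := by
    show csign (insert bV (upSimp t.1)) (insert bV (upSimp r0)) = _
    exact cs_shift bV_ge _ _
  rw [h0]


/-- A flow on the suspension takes opposite values on the two cones over a facet. -/
lemma bcol_neg (hdim : ∀ s ∈ K, s.card ≤ d + 1)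
    (ψ : {s : Finset (Fin (m + 2)) // s ∈ suspCx K ∧ s.card = d + 1 + 1} → ZMod q)
    (hker : ((kbnd (suspCx K) (d + 1 + 1)).map (Int.cast : ℤ → ZMod q)).mulVec ψ = 0)
    (t : {s : Finset (Fin m) // s ∈ K ∧ s.card = d + 1}) :
    ψ (Bcol K d t) = -ψ (Tcol K d t) := by
  have h := congrFun hker ⟨upSimp t.1, mem_susp_up t.2.1, by rw [card_up, t.2.2]; rfl⟩
  rw [mulVec_apply] at h
  rw [rowEval_up K d hdim ψ t] at h
  simp only [Pi.zero_apply] at h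
  have h2 := congrArg (fun z => (((-1 : ℤ) ^ (d + 1) : ℤ) : ZMod q) * z) h
  simp only [mul_zero, ← mul_assoc, ← Int.cast_mul, ← pow_add] at h2
  rw [Even.neg_one_pow ⟨d + 1, rfl⟩] at h2
  simp only [Int.cast_one, one_mul] at h2
  exact eq_neg_of_add_eq_zero_left (by rwa [add_comm] at h2)

/-- The bijection between nowhere-zero flows of `Δ` and of `ΣΔ`. -/
def flowEquiv (hdim : ∀ s ∈ K, s.card ≤ d + 1) :
    {φ : {s : Finset (Fin m) // s ∈ K ∧ s.card = d + 1} → ZMod q //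
        ((kbnd K (d + 1)).map (Int.cast : ℤ → ZMod q)).mulVec φ = 0 ∧ ∀ s, φ s ≠ 0} ≃
      {ψ : {s : Finset (Fin (m + 2)) // s ∈ suspCx K ∧ s.card = d + 1 + 1} → ZMod q //
        ((kbnd (suspCx K) (d + 1 + 1)).map (Int.cast : ℤ → ZMod q)).mulVec ψ = 0 ∧
          ∀ s, ψ s ≠ 0} where
  toFun φ := by
    refine ⟨fun s => Sum.elim φ.1 (fun t => -φ.1 t) ((colEquiv K d hdim).symm s), ?_, ?_⟩
    · funext r'
      rw [mulVec_apply]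
      simp only [Pi.zero_apply]
      rcases rowChar r'.2.1 r'.2.2 with ⟨t0, ht0, hc0, hup⟩ | ⟨r0, hr0, hc0, h | h⟩
      · rw [hup, rowEval_up K d hdim _ ⟨t0, ht0, hc0⟩]
        rw [symm_Tcol, symm_Bcol]
        simp
      · rw [h, rowEval_T K d hdim _ r0]
        have hk := congrFun φ.2.1 ⟨r0, hr0, hc0⟩
        rw [mulVec_apply] at hk
        simp only [Pi.zero_apply] at hk
        exact Eq.trans (Finset.sum_congr rfl (fun t _ => by rw [symm_Tcol]; rfl)) hk
      · rw [h, rowEval_B K d hdim _ r0]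
        have hk := congrFun φ.2.1 ⟨r0, hr0, hc0⟩
        rw [mulVec_apply] at hk
        simp only [Pi.zero_apply] at hk
        have : ∑ t : {s : Finset (Fin m) // s ∈ K ∧ s.card = d + 1},
            ((csign t.1 r0 : ℤ) : ZMod q) *
              Sum.elim φ.1 (fun t => -φ.1 t) ((colEquiv K d hdim).symm (Bcol K d t))
            = -∑ t : {s : Finset (Fin m) // s ∈ K ∧ s.card = d + 1},
                ((csign t.1 r0 : ℤ) : ZMod q) * φ.1 t := by
          rw [← Finset.sum_neg_distrib]
          apply Finset.sum_congr rfl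
          intro t _
          rw [symm_Bcol]
          simp
        rw [this, hk, neg_zero]
    · intro s
      rcases hsy : (colEquiv K d hdim).symm s with t | t
      · simpa [hsy] using φ.2.2 t
      · simpa [hsy] using φ.2.2 t
  invFun ψ := by
    refine ⟨fun t => ψ.1 (Tcol K d t), ?_, fun t => ψ.2.2 _⟩
    funext r
    rw [mulVec_apply]
    have h := congrFun ψ.2.1
      ⟨insert tV (upSimp r.1), mem_susp_T r.2.1, by rw [card_insert_up le_rfl, r.2.2]; rfl⟩
    rw [mulVec_apply] at h
    rw [rowEval_T K d hdim ψ.1 r.1] at h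
    simpa using h
  left_inv := by
    intro φ
    apply Subtype.ext
    funext t
    show Sum.elim φ.1 (fun t => -φ.1 t) ((colEquiv K d hdim).symm (Tcol K d t)) = φ.1 t
    rw [symm_Tcol]
    rfl
  right_inv := by
    intro ψ
    apply Subtype.ext
    funext s
    show Sum.elim (fun t => ψ.1 (Tcol K d t)) (fun t => -ψ.1 (Tcol K d t))
      ((colEquiv K d hdim).symm s) = ψ.1 s
    rcases hsy : (colEquiv K d hdim).symm s with t | t
    · have hs : s = Tcol K d t := by
        have := (colEquiv K d hdim).apply_symm_apply s
        rw [hsy] at this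
        exact this.symm
      rw [hs]
      rfl
    · have hs : s = Bcol K d t := by
        have := (colEquiv K d hdim).apply_symm_apply s
        rw [hsy] at this
        exact this.symm
      rw [hs]
      show -ψ.1 (Tcol K d t) = ψ.1 (Bcol K d t)
      rw [bcol_neg K d hdim ψ.1 ψ.2.1 t]

end

end Stmt2Aux

/-- Lemma 4.2: `Φ_Δ(q) = Φ_{ΣΔ}(q)` for a `d`-dimensional simplicial
complex `Δ` and its suspension `ΣΔ` (a `(d+1)`-dimensional complex). -/
theorem stmt2 {m : ℕ} (K : Finset (Finset (Fin m))) (d q : ℕ)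
    (hK : ∀ s ∈ K, ∀ t ⊆ s, t ∈ K)
    (hdim : ∀ s ∈ K, s.card ≤ d + 1) :
    kFlowCount K d q = kFlowCount (suspCx K) (d + 1) q := by
  unfold kFlowCount
  exact Nat.card_congr (Stmt2Aux.flowEquiv K d hdim)
end

section
/- The number of nowhere-zero modular q-flows of the complete d-dimensional simplicial complex on n = d+3 vertices, K_n^{n-2}, equals the falling factorial ∏_{i=1}^{n-1} (q - i). -/
open Matrix

/-- Boundary matrix of the complete complex `K_n^k` (facets: `k`-subsets of the `n`
vertices, ridges: `(k-1)`-subsets). -/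
def cbnd (n k : ℕ) :
    Matrix {r : Finset (Fin n) // r.card = k - 1} {s : Finset (Fin n) // s.card = k} ℤ :=
  fun r s => csign s.1 r.1

/-- Number of nowhere-zero modular `q`-flows of an integer matrix. -/
noncomputable def mFlowCount {R F : Type} [Fintype R] [Fintype F]
    (B : Matrix R F ℤ) (q : ℕ) : ℕ :=
  Nat.card {φ : F → ZMod q //
    (B.map (Int.cast : ℤ → ZMod q)).mulVec φ = 0 ∧ ∀ f, φ f ≠ 0}

namespace Stmt4

variable {n q : ℕ}

abbrev Fc (n : ℕ) := {s : Finset (Fin n) // s.card = n - 2}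
abbrev Rdg (n : ℕ) := {r : Finset (Fin n) // r.card = n - 2 - 1}

/-- the facet whose complement is the pair `{a,b}`. -/
def pf (a b : Fin n) (h : a ≠ b) : Fc n :=
  ⟨({a, b} : Finset (Fin n))ᶜ, by
    rw [Finset.card_compl, Finset.card_insert_of_notMem (by simp [h]),
      Finset.card_singleton, Fintype.card_fin]⟩

/-- the ridge whose complement is the triple `{a,b,c}`. -/
def rg (a b c : Fin n) (hab : a ≠ b) (hac : a ≠ c) (hbc : b ≠ c) : Rdg n :=
  ⟨({a, b, c} : Finset (Fin n))ᶜ, by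
    rw [Finset.card_compl, Finset.card_insert_of_notMem (by simp [hab, hac]),
      Finset.card_insert_of_notMem (by simp [hbc]), Finset.card_singleton, Fintype.card_fin]
    omega⟩

lemma csign_insert (r : Finset (Fin n)) (v : Fin n) (hv : v ∉ r) :
    csign (insert v r) r = (-1) ^ ((r.filter (fun w => w < v)).card) := by
  rw [csign, if_pos (Finset.subset_insert v r), Finset.insert_sdiff_cancel hv,
    Finset.sum_singleton, Finset.filter_insert, if_neg (lt_irrefl v)]

lemma filter_lt_card (v : Fin n) (t : Finset (Fin n)) :
    ((tᶜ).filter (fun w => w < v)).card + (t.filter (fun w => w < v)).card = v.val := by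
  have h1 : (tᶜ).filter (fun w => w < v) ∪ t.filter (fun w => w < v)
      = Finset.univ.filter (fun w => w < v) := by
    rw [← Finset.filter_union]; congr 1; ext x; simp [em, or_comm]
  have hd : Disjoint ((tᶜ).filter (fun w => w < v)) (t.filter (fun w => w < v)) := by
    apply Finset.disjoint_filter_filter
    exact disjoint_compl_left
  have h2 : Finset.univ.filter (fun w => w < v) = Finset.Iio v := by ext x; simp
  rw [← Finset.card_union_of_disjoint hd, h1, h2, Fin.card_Iio]

lemma neg_one_pow_split {x y m : ℕ} (h : x + y = m) :
    ((-1 : ZMod q)) ^ x = (-1) ^ m * (-1) ^ y := by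
  subst h
  rw [pow_add, mul_assoc, ← pow_add, ← two_mul, pow_mul, neg_one_sq, one_pow, mul_one]

section triples

variable {a b c : Fin n}

lemma ftri0 (hab : a < b) (hbc : b < c) :
    ({a, b, c} : Finset (Fin n)).filter (fun w => w < a) = ∅ := by
  rw [Finset.filter_eq_empty_iff]
  intro x hx
  simp only [Finset.mem_insert, Finset.mem_singleton] at hx
  rcases hx with rfl | rfl | rfl
  · exact lt_irrefl _
  · exact fun h => absurd (h.trans hab) (lt_irrefl _)
  · exact fun h => absurd (h.trans (hab.trans hbc)) (lt_irrefl _)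

lemma ftri1 (hab : a < b) (hbc : b < c) :
    ({a, b, c} : Finset (Fin n)).filter (fun w => w < b) = {a} := by
  rw [Finset.filter_insert, if_pos hab, Finset.filter_insert, if_neg (lt_irrefl b),
    Finset.filter_singleton, if_neg (by exact fun h => absurd (h.trans hbc) (lt_irrefl _))]
  rfl

lemma ftri2 (hab : a < b) (hbc : b < c) :
    ({a, b, c} : Finset (Fin n)).filter (fun w => w < c) = {a, b} := by
  rw [Finset.filter_insert, if_pos (hab.trans hbc), Finset.filter_insert, if_pos hbc,
    Finset.filter_singleton, if_neg (lt_irrefl c)]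
  rfl

lemma fpair0 (hab : a < b) :
    ({a, b} : Finset (Fin n)).filter (fun w => w < a) = ∅ := by
  rw [Finset.filter_insert, if_neg (lt_irrefl a), Finset.filter_singleton,
    if_neg (by exact fun h => absurd (h.trans hab) (lt_irrefl _))]

lemma fpair1 (hab : a < b) :
    ({a, b} : Finset (Fin n)).filter (fun w => w < b) = {a} := by
  rw [Finset.filter_insert, if_pos hab, Finset.filter_singleton, if_neg (lt_irrefl b)]
  rfl

lemma insert_compl_tri (hab : a ≠ b) (hac : a ≠ c) :
    insert a (({a, b, c} : Finset (Fin n))ᶜ) = ({b, c} : Finset (Fin n))ᶜ := by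
  ext x
  simp only [Finset.mem_insert, Finset.mem_compl, Finset.mem_insert, Finset.mem_singleton]
  by_cases hx : x = a
  · subst hx; simp [hab, hac]
  · tauto

lemma insert_compl_tri' (hab : a ≠ b) (hbc : b ≠ c) :
    insert b (({a, b, c} : Finset (Fin n))ᶜ) = ({a, c} : Finset (Fin n))ᶜ := by
  ext x
  simp only [Finset.mem_insert, Finset.mem_compl, Finset.mem_insert, Finset.mem_singleton]
  by_cases hx : x = b
  · subst hx; simp [Ne.symm hab, hbc]
  · tauto

lemma insert_compl_tri'' (hac : a ≠ c) (hbc : b ≠ c) :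
    insert c (({a, b, c} : Finset (Fin n))ᶜ) = ({a, b} : Finset (Fin n))ᶜ := by
  ext x
  simp only [Finset.mem_insert, Finset.mem_compl, Finset.mem_insert, Finset.mem_singleton]
  by_cases hx : x = c
  · subst hx; simp [Ne.symm hac, Ne.symm hbc]
  · tauto

end triples

lemma exists_sorted_two (t : Finset (Fin n)) (ht : t.card = 2) :
    ∃ a b : Fin n, a < b ∧ t = {a, b} := by
  obtain ⟨x, y, hxy, rfl⟩ := Finset.card_eq_two.mp ht
  rcases lt_or_gt_of_ne hxy with h | h
  · exact ⟨x, y, h, rfl⟩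
  · exact ⟨y, x, h, Finset.pair_comm x y⟩

lemma exists_sorted_three (t : Finset (Fin n)) (ht : t.card = 3) :
    ∃ a b c : Fin n, a < b ∧ b < c ∧ t = {a, b, c} := by
  obtain ⟨x, y, z, hxy, hxz, hyz, rfl⟩ := Finset.card_eq_three.mp ht
  have perm : ∀ u v w : Fin n, ({u, v, w} : Finset (Fin n)) = {u, w, v} := by
    intro u v w; ext s; simp; tauto
  have perm2 : ∀ u v w : Fin n, ({u, v, w} : Finset (Fin n)) = {v, u, w} := by
    intro u v w; ext s; simp; tauto
  rcases lt_trichotomy x y with h1 | h1 | h1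
  · rcases lt_trichotomy y z with h2 | h2 | h2
    · exact ⟨x, y, z, h1, h2, rfl⟩
    · exact absurd h2 hyz
    · rcases lt_trichotomy x z with h3 | h3 | h3
      · exact ⟨x, z, y, h3, h2, perm x y z⟩
      · exact absurd h3 hxz
      · exact ⟨z, x, y, h3, h1, by ext s; simp; tauto⟩
  · exact absurd h1 hxy
  · rcases lt_trichotomy x z with h2 | h2 | h2
    · exact ⟨y, x, z, h1, h2, perm2 x y z⟩
    · exact absurd h2 hxz
    · rcases lt_trichotomy y z with h3 | h3 | h3
      · exact ⟨y, z, x, h3, h2, by ext s; simp; tauto⟩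
      · exact absurd h3 hyz
      · refine ⟨z, y, x, h3, h1, ?_⟩
        ext s; simp; tauto

/-- The key "row" formula for the boundary matrix at a ridge with complement `{a,b,c}`. -/
lemma row (hn : 4 ≤ n) (φ : Fc n → ZMod q) {a b c : Fin n} (hab : a < b) (hbc : b < c) :
    ((cbnd n (n - 2)).map (Int.cast : ℤ → ZMod q)).mulVec φ
      (rg a b c hab.ne (hab.trans hbc).ne hbc.ne) =
    (-1) ^ a.val * φ (pf b c hbc.ne) - (-1) ^ b.val * φ (pf a c (hab.trans hbc).ne)
      + (-1) ^ c.val * φ (pf a b hab.ne) := by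
  classical
  have hac : a < c := hab.trans hbc
  set r : Finset (Fin n) := ({a, b, c} : Finset (Fin n))ᶜ with hr
  have har : a ∉ r := by simp [hr]
  have hbr : b ∉ r := by simp [hr]
  have hcr : c ∉ r := by simp [hr]
  have hfa : (pf b c hbc.ne).1 = insert a r := (insert_compl_tri hab.ne hac.ne).symm
  have hfb : (pf a c hac.ne).1 = insert b r := (insert_compl_tri' hab.ne hbc.ne).symm
  have hfc : (pf a b hab.ne).1 = insert c r := (insert_compl_tri'' hac.ne hbc.ne).symm
  have hne1 : pf b c hbc.ne ≠ pf a c hac.ne := by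
    intro h
    have h2 := congrArg (fun s : Fc n => (s.1)ᶜ) h
    simp only [pf, compl_compl] at h2
    have : a ∈ ({b, c} : Finset (Fin n)) := h2 ▸ (by simp)
    simp only [Finset.mem_insert, Finset.mem_singleton] at this
    rcases this with h | h
    · exact hab.ne h
    · exact hac.ne h
  have hne2 : pf b c hbc.ne ≠ pf a b hab.ne := by
    intro h
    have h2 := congrArg (fun s : Fc n => (s.1)ᶜ) h
    simp only [pf, compl_compl] at h2
    have : a ∈ ({b, c} : Finset (Fin n)) := h2 ▸ (by simp)
    simp only [Finset.mem_insert, Finset.mem_singleton] at this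
    rcases this with h | h
    · exact hab.ne h
    · exact hac.ne h
  have hne3 : pf a c hac.ne ≠ pf a b hab.ne := by
    intro h
    have h2 := congrArg (fun s : Fc n => (s.1)ᶜ) h
    simp only [pf, compl_compl] at h2
    have : c ∈ ({a, b} : Finset (Fin n)) := h2 ▸ (by simp)
    simp only [Finset.mem_insert, Finset.mem_singleton] at this
    rcases this with h | h
    · exact hac.ne' h
    · exact hbc.ne' h
  have hT : ∑ s : Fc n, ((csign s.1 r : ℤ) : ZMod q) * φ s
      = ∑ s ∈ ({pf b c hbc.ne, pf a c hac.ne, pf a b hab.ne} : Finset (Fc n)),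
          ((csign s.1 r : ℤ) : ZMod q) * φ s := by
    refine (Finset.sum_subset (Finset.subset_univ _) ?_).symm
    intro s _ hs
    have hz : csign s.1 r = 0 := by
      rw [csign]
      split_ifs with hsub
      · exfalso
        have hcard : (s.1 \ r).card = 1 := by
          rw [Finset.card_sdiff_of_subset hsub, s.2]
          have : r.card = n - 2 - 1 := (rg a b c hab.ne hac.ne hbc.ne).2
          rw [this]; omega
        obtain ⟨v, hv⟩ := Finset.card_eq_one.mp hcard
        have hsv : s.1 = insert v r := by
          rw [← Finset.union_sdiff_of_subset hsub, hv, Finset.union_comm, ← Finset.insert_eq]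
        have hvr : v ∉ r := by
          have : v ∈ s.1 \ r := hv ▸ Finset.mem_singleton_self v
          exact (Finset.mem_sdiff.mp this).2
        have hvt : v ∈ ({a, b, c} : Finset (Fin n)) := by
          by_contra hvt
          exact hvr (Finset.mem_compl.mpr hvt)
        simp only [Finset.mem_insert, Finset.mem_singleton] at hvt
        apply hs
        simp only [Finset.mem_insert, Finset.mem_singleton]
        rcases hvt with rfl | rfl | rfl
        · left; exact Subtype.ext (hsv.trans hfa.symm)
        · right; left; exact Subtype.ext (hsv.trans hfb.symm)
        · right; right; exact Subtype.ext (hsv.trans hfc.symm)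
      · rfl
    rw [hz]; push_cast; ring
  have hka : ((r.filter (fun w => w < a)).card : ℕ) = a.val := by
    have := filter_lt_card a ({a, b, c} : Finset (Fin n))
    rw [ftri0 hab hbc, ← hr] at this
    simp only [Finset.card_empty, add_zero] at this
    exact this
  have hkb : (r.filter (fun w => w < b)).card + 1 = b.val := by
    have := filter_lt_card b ({a, b, c} : Finset (Fin n))
    rw [ftri1 hab hbc, ← hr] at this
    simp only [Finset.card_singleton] at this
    exact this
  have hkc : (r.filter (fun w => w < c)).card + 2 = c.val := by
    have := filter_lt_card c ({a, b, c} : Finset (Fin n))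
    rw [ftri2 hab hbc, ← hr] at this
    rw [Finset.card_insert_of_notMem (by simp [hab.ne]), Finset.card_singleton] at this
    exact this
  have expand : ((cbnd n (n - 2)).map (Int.cast : ℤ → ZMod q)).mulVec φ
      (rg a b c hab.ne hac.ne hbc.ne)
      = ∑ s : Fc n, ((csign s.1 r : ℤ) : ZMod q) * φ s := by
    simp [Matrix.mulVec, dotProduct, Matrix.map_apply, cbnd, rg, hr]
  rw [expand, hT, Finset.sum_insert (by simp [hne1, hne2]),
    Finset.sum_insert (by simp [hne3]), Finset.sum_singleton,
    hfa, hfb, hfc, csign_insert r a har, csign_insert r b hbr, csign_insert r c hcr]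
  push_cast
  rw [hka, neg_one_pow_split (q := q) hkb, neg_one_pow_split (q := q) hkc]
  ring

variable (q) in
/-- The candidate flow attached to a "potential" `h`. -/
def Phi (h : Fin n → ZMod q) (s : Fc n) : ZMod q :=
  (-1) ^ ((s.1ᶜ).sum (fun v => v.val)) *
    ∑ v ∈ s.1ᶜ, (-1) ^ (((s.1ᶜ).filter (fun w => w < v)).card + 1) * h v

lemma Phi_pair (h : Fin n → ZMod q) {a b : Fin n} (hab : a < b) :
    Phi q h (pf a b hab.ne) = (-1) ^ (a.val + b.val) * (h b - h a) := by
  have hc : ((pf a b hab.ne).1)ᶜ = ({a, b} : Finset (Fin n)) := compl_compl _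
  rw [Phi, hc, Finset.sum_pair hab.ne, Finset.sum_pair hab.ne, fpair0 hab, fpair1 hab]
  simp only [Finset.card_empty, Finset.card_singleton, zero_add, pow_one, neg_one_sq]
  ring

lemma Phi_flow (hn : 4 ≤ n) (h : Fin n → ZMod q) :
    ((cbnd n (n - 2)).map (Int.cast : ℤ → ZMod q)).mulVec (Phi q h) = 0 := by
  funext r
  obtain ⟨a, b, c, hab, hbc, ht⟩ := exists_sorted_three (r.1ᶜ) (by
    rw [Finset.card_compl, r.2, Fintype.card_fin]; omega)
  have hr : r = rg a b c hab.ne (hab.trans hbc).ne hbc.ne := by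
    apply Subtype.ext
    have h2 := congrArg (fun x : Finset (Fin n) => xᶜ) ht
    simp only [compl_compl] at h2
    exact h2
  show _ = (0 : ZMod q)
  rw [hr, row hn (Phi q h) hab hbc, Phi_pair h hbc, Phi_pair h (hab.trans hbc),
    Phi_pair h hab, pow_add, pow_add, pow_add]
  ring

variable (n q) in
def hmap [NeZero n] (φ : Fc n → ZMod q) (v : Fin n) : ZMod q :=
  if hv : v = 0 then 0 else (-1) ^ v.val * φ (pf 0 v (Ne.symm hv))

lemma hmap_recover (hn : 4 ≤ n) [NeZero n] (φ : Fc n → ZMod q)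
    (hφ : ((cbnd n (n - 2)).map (Int.cast : ℤ → ZMod q)).mulVec φ = 0) :
    Phi q (hmap n q φ) = φ := by
  funext s
  obtain ⟨a, b, hab, ht⟩ := exists_sorted_two (s.1ᶜ) (by
    rw [Finset.card_compl, s.2, Fintype.card_fin]; omega)
  have hs : s = pf a b hab.ne := by
    apply Subtype.ext
    have h2 := congrArg (fun x : Finset (Fin n) => xᶜ) ht
    simp only [compl_compl] at h2
    exact h2
  have hb0 : b ≠ 0 := by
    intro h
    exact absurd (h ▸ hab) (by simp [Fin.le_zero_iff])
  rw [hs, Phi_pair _ hab]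
  by_cases ha : a = 0
  · subst ha
    rw [hmap, hmap, dif_pos rfl, dif_neg hb0, sub_zero, ← mul_assoc, ← pow_add,
      Fin.val_zero, zero_add, Even.neg_one_pow ⟨b.val, rfl⟩, one_mul]
  · have h0a : (0 : Fin n) < a := (Fin.pos_iff_ne_zero' a).mpr ha
    have E := congrFun hφ (rg 0 a b h0a.ne (h0a.trans hab).ne hab.ne)
    rw [row hn φ h0a hab] at E
    simp only [Pi.zero_apply, Fin.val_zero, pow_zero, one_mul] at E
    rw [hmap, hmap, dif_neg ha, dif_neg hb0]
    have huu : (-1 : ZMod q) ^ a.val * (-1) ^ a.val = 1 := by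
      rw [← pow_add]; exact Even.neg_one_pow ⟨a.val, rfl⟩
    have hvv : (-1 : ZMod q) ^ b.val * (-1) ^ b.val = 1 := by
      rw [← pow_add]; exact Even.neg_one_pow ⟨b.val, rfl⟩
    rw [pow_add]
    linear_combination ((-1 : ZMod q) ^ a.val * φ (pf 0 b (h0a.trans hab).ne)) * hvv
      - ((-1 : ZMod q) ^ b.val * φ (pf 0 a h0a.ne)) * huu - E


lemma Phi_nonzero (hn : 4 ≤ n) (h : Fin n → ZMod q) (hinj : Function.Injective h) (s : Fc n) :
    Phi q h s ≠ 0 := by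
  obtain ⟨a, b, hab, ht⟩ := exists_sorted_two (s.1ᶜ) (by
    rw [Finset.card_compl, s.2, Fintype.card_fin]; omega)
  have hs : s = pf a b hab.ne := by
    apply Subtype.ext
    have h2 := congrArg (fun x : Finset (Fin n) => xᶜ) ht
    simp only [compl_compl] at h2
    exact h2
  rw [hs, Phi_pair _ hab]
  intro h0
  have h1 : (-1 : ZMod q) ^ (a.val + b.val) * ((-1) ^ (a.val + b.val) * (h b - h a)) = 0 := by
    rw [h0, mul_zero]
  rw [← mul_assoc, ← pow_add, Even.neg_one_pow ⟨a.val + b.val, rfl⟩, one_mul,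
    sub_eq_zero] at h1
  exact hab.ne' (hinj h1)

lemma hmap_injective (hn : 4 ≤ n) [NeZero n] (φ : Fc n → ZMod q)
    (hφ : ((cbnd n (n - 2)).map (Int.cast : ℤ → ZMod q)).mulVec φ = 0)
    (hnz : ∀ f, φ f ≠ 0) : Function.Injective (hmap n q φ) := by
  have key : ∀ a b : Fin n, a < b → hmap n q φ a ≠ hmap n q φ b := by
    intro a b hab heq
    apply hnz (pf a b hab.ne)
    rw [← congrFun (hmap_recover hn φ hφ) (pf a b hab.ne), Phi_pair _ hab,
      ← heq, sub_self, mul_zero]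
  intro i j hij
  rcases lt_trichotomy i j with h | h | h
  · exact absurd hij (key i j h)
  · exact h
  · exact absurd hij.symm (key j i h)

variable (n q) in
def flowEquiv (hn : 4 ≤ n) [NeZero n] :
    {φ : Fc n → ZMod q //
        ((cbnd n (n - 2)).map (Int.cast : ℤ → ZMod q)).mulVec φ = 0 ∧ ∀ f, φ f ≠ 0} ≃
      {h : Fin n → ZMod q // h 0 = 0 ∧ Function.Injective h} where
  toFun φ := ⟨hmap n q φ.1, dif_pos rfl, hmap_injective hn φ.1 φ.2.1 φ.2.2⟩
  invFun h := ⟨Phi q h.1, Phi_flow hn h.1, fun s => Phi_nonzero hn h.1 h.2.2 s⟩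
  left_inv φ := Subtype.ext (hmap_recover hn φ.1 φ.2.1)
  right_inv h := by
    apply Subtype.ext
    funext v
    show hmap n q (Phi q h.1) v = h.1 v
    by_cases hv : v = 0
    · rw [hmap, dif_pos hv, hv, h.2.1]
    · have h0v : (0 : Fin n) < v := (Fin.pos_iff_ne_zero' v).mpr hv
      rw [hmap, dif_neg hv, Phi_pair _ h0v, h.2.1, sub_zero, ← mul_assoc, ← pow_add,
        Fin.val_zero, zero_add, Even.neg_one_pow ⟨v.val, rfl⟩, one_mul]

variable (n q) in
def potEquiv [NeZero n] :
    {h : Fin n → ZMod q // h 0 = 0 ∧ Function.Injective h} ≃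
      ({i : Fin n // i ≠ 0} ↪ {x : ZMod q // x ≠ 0}) where
  toFun h := ⟨fun i => ⟨h.1 i.1, fun H => i.2 (h.2.2 (H.trans h.2.1.symm))⟩,
    fun i j hij => Subtype.ext (h.2.2 (congrArg Subtype.val hij))⟩
  invFun f := ⟨fun v => if hv : v = 0 then 0 else (f ⟨v, hv⟩).1, dif_pos rfl, by
    intro i j hij
    by_cases hi : i = 0 <;> by_cases hj : j = 0
    · rw [hi, hj]
    · simp only [dif_pos hi, dif_neg hj] at hij
      exact absurd hij.symm (f ⟨j, hj⟩).2
    · simp only [dif_neg hi, dif_pos hj] at hij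
      exact absurd hij (f ⟨i, hi⟩).2
    · simp only [dif_neg hi, dif_neg hj] at hij
      have := f.injective (a₁ := ⟨i, hi⟩) (a₂ := ⟨j, hj⟩) (Subtype.ext hij)
      exact congrArg Subtype.val this⟩
  left_inv h := by
    apply Subtype.ext
    funext v
    by_cases hv : v = 0
    · simp only [dif_pos hv]
      rw [hv, h.2.1]
    · simp only [dif_neg hv]
      rfl
  right_inv f := by
    apply Function.Embedding.ext
    intro i
    apply Subtype.ext
    show (if hv : i.1 = 0 then (0 : ZMod q) else (f ⟨i.1, hv⟩).1) = (f i).1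
    rw [dif_neg i.2]

lemma count_eq (hn : 4 ≤ n) (hq : 1 ≤ q) :
    mFlowCount (cbnd n (n - 2)) q = (q - 1).descFactorial (n - 1) := by
  have : NeZero n := ⟨by omega⟩
  have : NeZero q := ⟨by omega⟩
  rw [mFlowCount]
  rw [Nat.card_congr ((flowEquiv n q hn).trans (potEquiv n q))]
  rw [Nat.card_eq_fintype_card, Fintype.card_embedding_eq]
  congr 1
  · have h1 : Fintype.card {x : ZMod q // ¬ x = 0} = q - 1 := by
      rw [Fintype.card_subtype_compl, Fintype.card_subtype_eq, ZMod.card]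
    exact h1
  · have h1 : Fintype.card {i : Fin n // ¬ i = 0} = n - 1 := by
      rw [Fintype.card_subtype_compl, Fintype.card_subtype_eq, Fintype.card_fin]
    exact h1

end Stmt4

/-- Proposition 4.3: the number of nowhere-zero modular `q`-flows of
the complete `(n-3)`-dimensional complex `K_n^{n-2}` is `∏_{i=1}^{n-1} (q - i)`. -/
theorem stmt4 (n q : ℕ) (hn : 4 ≤ n) (hq : 1 ≤ q) :
    (mFlowCount (cbnd n (n - 2)) q : ℤ) = ∏ i ∈ Finset.Icc 1 (n - 1), ((q : ℤ) - i) := by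
  rw [Stmt4.count_eq hn hq]
  rcases le_or_gt n q with h | h
  · rw [Nat.descFactorial_eq_prod_range, Nat.cast_prod]
    refine Finset.prod_bij (fun i _ => i + 1) ?_ ?_ ?_ ?_
    · intro i hi
      simp only [Finset.mem_range] at hi
      simp only [Finset.mem_Icc]
      omega
    · intro i _ j _ hij
      have h2 : i + 1 = j + 1 := hij
      omega
    · intro j hj
      simp only [Finset.mem_Icc] at hj
      refine ⟨j - 1, by simp only [Finset.mem_range]; omega, ?_⟩
      show j - 1 + 1 = j
      omega
    · intro i hi
      simp only [Finset.mem_range] at hi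
      have h1 : 1 + i ≤ q := by omega
      rw [Nat.sub_sub, Nat.cast_sub h1]
      push_cast
      ring
  · have h1 : q - 1 < n - 1 := by omega
    rw [Nat.descFactorial_eq_zero_iff_lt.mpr h1]
    symm
    apply Finset.prod_eq_zero (i := q) (by simp [Finset.mem_Icc]; omega)
    simp
end

section
/- The simplices of K_{n-1}^{k-1} containing a fixed vertex, viewed as columns of ∂(K_n^k), form a maximal linearly independent set (a basis of the column space) of the boundary matrix of K_n^k. -/
open Matrix

/-- The column of `∂(K_n^k)` indexed by the facet `s`, as a vector over `ℚ`. -/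
def ccol (n k : ℕ) (s : {s : Finset (Fin n) // s.card = k}) :
    {r : Finset (Fin n) // r.card = k - 1} → ℚ :=
  fun r => ((cbnd n k) r s : ℚ)

lemma csign_not_subset {n : ℕ} {s r : Finset (Fin n)} (h : ¬ r ⊆ s) : csign s r = 0 := if_neg h

lemma csign_single {n : ℕ} {s r : Finset (Fin n)} (h : r ⊆ s) {a : Fin n} (hd : s \ r = {a}) :
    csign s r = (-1) ^ ((s.filter (fun w => w < a)).card) := by
  rw [csign, if_pos h, hd, Finset.sum_singleton]

lemma key_pair {n : ℕ} {t r : Finset (Fin n)} (hrt : r ⊆ t) {a b : Fin n} (hab : a < b)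
    (hpair : t \ r = {a, b}) :
    ∑ u ∈ t, csign t (t.erase u) * csign (t.erase u) r = 0 := by
  have ha : a ∈ t \ r := by rw [hpair]; exact Finset.mem_insert_self _ _
  have hb : b ∈ t \ r := by rw [hpair]; exact Finset.mem_insert_of_mem (Finset.mem_singleton_self _)
  have hat : a ∈ t := (Finset.mem_sdiff.mp ha).1
  have hbt : b ∈ t := (Finset.mem_sdiff.mp hb).1
  have har : a ∉ r := (Finset.mem_sdiff.mp ha).2
  have hbr : b ∉ r := (Finset.mem_sdiff.mp hb).2
  have hz : ∀ u ∈ t, u ∉ t \ r → csign t (t.erase u) * csign (t.erase u) r = 0 := by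
    intro u hu hnu
    have hur : u ∈ r := by
      by_contra hc; exact hnu (Finset.mem_sdiff.mpr ⟨hu, hc⟩)
    have : ¬ r ⊆ t.erase u := fun hsub => (Finset.notMem_erase u t) (hsub hur)
    rw [csign_not_subset this, mul_zero]
  rw [← Finset.sum_subset Finset.sdiff_subset hz, hpair, Finset.sum_pair hab.ne]
  -- compute each of the four csigns
  have e1 : csign t (t.erase a) = (-1) ^ ((t.filter (fun w => w < a)).card) :=
    csign_single (Finset.erase_subset _ _) (Finset.sdiff_erase_self hat)
  have e2 : csign t (t.erase b) = (-1) ^ ((t.filter (fun w => w < b)).card) :=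
    csign_single (Finset.erase_subset _ _) (Finset.sdiff_erase_self hbt)
  have hra : r ⊆ t.erase a := Finset.subset_erase.mpr ⟨hrt, har⟩
  have hrb : r ⊆ t.erase b := Finset.subset_erase.mpr ⟨hrt, hbr⟩
  have hda : (t.erase a) \ r = {b} := by
    rw [Finset.erase_sdiff_comm, hpair, Finset.erase_insert (by simp [hab.ne])]
  have hdb : (t.erase b) \ r = {a} := by
    rw [Finset.erase_sdiff_comm, hpair]
    rw [Finset.pair_comm, Finset.erase_insert (by simp [hab.ne'])]
  have e3 : csign (t.erase a) r = (-1) ^ (((t.erase a).filter (fun w => w < b)).card) :=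
    csign_single hra hda
  have e4 : csign (t.erase b) r = (-1) ^ (((t.erase b).filter (fun w => w < a)).card) :=
    csign_single hrb hdb
  have hf1 : (t.erase b).filter (fun w => w < a) = t.filter (fun w => w < a) := by
    rw [Finset.filter_erase, Finset.erase_eq_of_notMem (by simp [asymm hab])]
  have hmem : a ∈ t.filter (fun w => w < b) := Finset.mem_filter.mpr ⟨hat, hab⟩
  have hcard : (t.filter (fun w => w < b)).card
      = ((t.erase a).filter (fun w => w < b)).card + 1 := by
    rw [Finset.filter_erase, Finset.card_erase_add_one hmem]
  rw [e1, e2, e3, e4, hf1, hcard, pow_succ]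
  ring

lemma key {n : ℕ} (t r : Finset (Fin n)) (hc : r.card + 2 = t.card) :
    ∑ u ∈ t, csign t (t.erase u) * csign (t.erase u) r = 0 := by
  by_cases hrt : r ⊆ t
  · have hcard : (t \ r).card = 2 := by
      rw [Finset.card_sdiff_of_subset hrt]; omega
    obtain ⟨a, b, hab, hpair⟩ := Finset.card_eq_two.mp hcard
    rcases hab.lt_or_gt with h | h
    · exact key_pair hrt h hpair
    · exact key_pair hrt h (by rw [hpair, Finset.pair_comm])
  · apply Finset.sum_eq_zero
    intro u hu
    have : ¬ r ⊆ t.erase u := fun hsub => hrt (hsub.trans (Finset.erase_subset _ _))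
    rw [csign_not_subset this, mul_zero]

lemma csign_erase_ne_zero {n : ℕ} {s : Finset (Fin n)} {v : Fin n} (hv : v ∈ s) :
    csign s (s.erase v) ≠ 0 := by
  rw [csign_single (Finset.erase_subset _ _) (Finset.sdiff_erase_self hv)]
  exact pow_ne_zero _ (by norm_num)

/-- Lemma 4.5: the columns of `∂(K_n^k)` indexed by facets containing
a fixed vertex `v` are linearly independent over `ℚ` and span the full column space,
i.e. they form a basis of the column space of the boundary matrix of `K_n^k`. -/
theorem stmt7 (n k : ℕ) (h2 : 2 ≤ k) (hk : k ≤ n - 1) (v : Fin n) :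
    LinearIndependent ℚ
      (fun s : {s : {s : Finset (Fin n) // s.card = k} // v ∈ s.1.1} => ccol n k s.1) ∧
    Submodule.span ℚ
        (Set.range (fun s : {s : {s : Finset (Fin n) // s.card = k} // v ∈ s.1.1} =>
          ccol n k s.1)) =
      Submodule.span ℚ (Set.range (ccol n k)) := by
  constructor
  · rw [Fintype.linearIndependent_iff]
    intro g hg i
    obtain ⟨⟨s, hs⟩, hv⟩ := i
    have hr : (s.erase v).card = k - 1 := by rw [Finset.card_erase_of_mem hv, hs]
    have hg' := congrFun hg ⟨s.erase v, hr⟩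
    simp only [Finset.sum_apply, Pi.smul_apply, Pi.zero_apply, smul_eq_mul] at hg'
    rw [Finset.sum_eq_single (⟨⟨s, hs⟩, hv⟩ : {s : {s : Finset (Fin n) // s.card = k} // v ∈ s.1.1})] at hg'
    · have hcs : csign s (s.erase v) ≠ 0 := csign_erase_ne_zero hv
      have : (csign s (s.erase v) : ℚ) ≠ 0 := Int.cast_ne_zero.mpr hcs
      have hcc : ccol n k ⟨s, hs⟩ ⟨s.erase v, hr⟩ = (csign s (s.erase v) : ℚ) := rfl
      rw [hcc] at hg'
      exact (mul_eq_zero.mp hg').resolve_right this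
    · intro j _ hj
      obtain ⟨⟨s', hs'⟩, hv'⟩ := j
      have : ¬ s.erase v ⊆ s' := by
        intro hsub
        have hss : s ⊆ s' := by
          intro x hx
          rcases eq_or_ne x v with rfl | hne
          · exact hv'
          · exact hsub (Finset.mem_erase.mpr ⟨hne, hx⟩)
        have : s' = s := (Finset.eq_of_subset_of_card_le hss (by rw [hs, hs'])).symm
        subst this
        exact hj rfl
      have hcc : ccol n k ⟨s', hs'⟩ ⟨s.erase v, hr⟩ = ((csign s' (s.erase v) : ℤ) : ℚ) := rfl
      rw [hcc, csign_not_subset this]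
      simp
    · intro h; exact absurd (Finset.mem_univ _) h
  · apply le_antisymm
    · apply Submodule.span_mono
      rintro _ ⟨s, rfl⟩
      exact ⟨s.1, rfl⟩
    · rw [Submodule.span_le]
      rintro _ ⟨⟨s, hs⟩, rfl⟩
      by_cases hv : v ∈ s
      · exact Submodule.subset_span ⟨⟨⟨s, hs⟩, hv⟩, rfl⟩
      · set t := insert v s with ht
        have hvt : v ∈ t := Finset.mem_insert_self _ _
        have htc : t.card = k + 1 := by rw [Finset.card_insert_of_notMem hv, hs]
        have htev : t.erase v = s := Finset.erase_insert hv
        have hcard : ∀ u ∈ s, (t.erase u).card = k := by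
          intro u hu
          rw [Finset.card_erase_of_mem (Finset.mem_insert_of_mem hu), htc]; omega
        have hεv : ((csign t s : ℤ) : ℚ) ≠ 0 := by
          have h0 := csign_erase_ne_zero hvt
          rw [htev] at h0
          exact Int.cast_ne_zero.mpr h0
        have hrel : ccol n k ⟨s, hs⟩ = ∑ u ∈ s.attach,
            (-(((csign t s : ℤ) : ℚ))⁻¹ * ((csign t (t.erase u.1) : ℤ) : ℚ)) •
              ccol n k ⟨t.erase u.1, hcard u.1 u.2⟩ := by
          funext r
          have hkey := key t r.1 (by rw [r.2, htc]; omega)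
          have hkeyQ : ∑ u ∈ t, ((csign t (t.erase u) : ℤ) : ℚ) * ((csign (t.erase u) r.1 : ℤ) : ℚ) = 0 := by
            have := congrArg (fun z : ℤ => (z : ℚ)) hkey
            push_cast at this
            simpa using this
          rw [ht, Finset.sum_insert hv, ← ht, htev] at hkeyQ
          simp only [Finset.sum_apply, Pi.smul_apply, smul_eq_mul]
          have hss : ∑ u ∈ s.attach,
              (-(((csign t s : ℤ) : ℚ))⁻¹ * ((csign t (t.erase u.1) : ℤ) : ℚ)) *
                ccol n k ⟨t.erase u.1, hcard u.1 u.2⟩ r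
              = ∑ u ∈ s, -(((csign t s : ℤ) : ℚ))⁻¹ *
                  (((csign t (t.erase u) : ℤ) : ℚ) * ((csign (t.erase u) r.1 : ℤ) : ℚ)) := by
            rw [← Finset.sum_attach s (fun u => -(((csign t s : ℤ) : ℚ))⁻¹ *
                  (((csign t (t.erase u) : ℤ) : ℚ) * ((csign (t.erase u) r.1 : ℤ) : ℚ)))]
            apply Finset.sum_congr rfl
            intro u _
            have hc : ccol n k ⟨t.erase u.1, hcard u.1 u.2⟩ r = ((csign (t.erase u.1) r.1 : ℤ) : ℚ) := rfl
            rw [hc]; ring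
          rw [hss, ← Finset.mul_sum]
          have hsum : ∑ u ∈ s, ((csign t (t.erase u) : ℤ) : ℚ) * ((csign (t.erase u) r.1 : ℤ) : ℚ)
              = -(((csign t s : ℤ) : ℚ) * ((csign s r.1 : ℤ) : ℚ)) := by
            linarith [hkeyQ]
          rw [hsum]
          have hc2 : ccol n k ⟨s, hs⟩ r = ((csign s r.1 : ℤ) : ℚ) := rfl
          rw [hc2]
          field_simp
        rw [hrel]
        apply Submodule.sum_mem
        intro u _
        apply Submodule.smul_mem
        apply Submodule.subset_span
        have hvu : v ∈ t.erase u.1 :=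
          Finset.mem_erase.mpr ⟨fun h => hv (h ▸ u.2), hvt⟩
        exact ⟨⟨⟨t.erase u.1, hcard u.1 u.2⟩, hvu⟩, rfl⟩
end

section
/- A nowhere-zero vector ψ ∈ Z_q^{n-1} satisfies that ∂(K_{n-1}^{n-2})ψ^T has every entry nonzero mod q if and only if all entries ψ_1,...,ψ_{n-1} are nonzero and pairwise distinct mod q. Consequently the number of such ψ is (q-1)(q-2)···(q-(n-1)). -/
open Matrix

/-- Reorientation sign of a facet of `∂Δ^{n-2}`: `(-1)^a` where `a` is the missing
vertex.  With this standard orientation every row of the boundary matrix of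
`K_{n-1}^{n-2}` has exactly two nonzero entries `±1` of opposite sign. -/
def osign {n : ℕ} (s : Finset (Fin n)) : ℤ := ∑ v ∈ sᶜ, (-1 : ℤ) ^ (v : ℕ)

/-- The boundary matrix of `K_{n-1}^{n-2}` (the boundary of the `(n-2)`-simplex,
a triangulation of `S^{n-3}`), with the standard orientation, reduced mod `q`. -/
def obnd (n q : ℕ) :
    Matrix {r : Finset (Fin (n - 1)) // r.card = n - 2 - 1}
      {s : Finset (Fin (n - 1)) // s.card = n - 2} (ZMod q) :=
  fun r s => ((osign s.1 * cbnd (n - 1) (n - 2) r s : ℤ) : ZMod q)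

lemma aux_osign {m : ℕ} {s : Finset (Fin m)} {a : Fin m} (h : sᶜ = {a}) :
    osign s = (-1 : ℤ) ^ (a : ℕ) := by
  rw [osign, h, Finset.sum_singleton]

lemma aux_csign {m : ℕ} {r : Finset (Fin m)} {a : Fin m} (ha : a ∉ r) :
    csign (insert a r) r = (-1 : ℤ) ^ ((r.filter (fun w => w < a)).card) := by
  rw [csign, if_pos (Finset.subset_insert a r), Finset.insert_sdiff_cancel ha,
    Finset.sum_singleton, Finset.filter_insert, if_neg (lt_irrefl a)]

lemma aux_pos {m : ℕ} (r : Finset (Fin m)) (c : Fin m) :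
    (r.filter (fun w => w < c)).card + ((rᶜ).filter (fun w => w < c)).card = c := by
  rw [← Finset.card_union_of_disjoint
    (Finset.disjoint_filter_filter disjoint_compl_right), ← Finset.filter_union,
    Finset.union_compl]
  have : Finset.univ.filter (fun w => w < c) = Finset.Iio c := by
    ext w; simp
  rw [this, Fin.card_Iio]

lemma stmt8_key (n q : ℕ)
    (ψ : {s : Finset (Fin (n - 1)) // s.card = n - 2} → ZMod q)
    (r : Finset (Fin (n - 1))) (hr : r.card = n - 2 - 1)
    (a b : Fin (n - 1)) (hab : a < b) (hc : rᶜ = {a, b})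
    (hsa : (insert a r).card = n - 2) (hsb : (insert b r).card = n - 2) :
    (obnd n q).mulVec ψ ⟨r, hr⟩ =
      (((-1 : ℤ) ^ ((a : ℕ) + (b : ℕ)) : ℤ) : ZMod q) *
        (ψ ⟨insert a r, hsa⟩ - ψ ⟨insert b r, hsb⟩) := by
  have hne' : (a : ℕ) ≠ (b : ℕ) := fun h => absurd (Fin.ext h) hab.ne
  have har : a ∉ r := by
    have : a ∈ rᶜ := by rw [hc]; exact Finset.mem_insert_self a {b}
    exact Finset.mem_compl.mp this
  have hbr : b ∉ r := by
    have : b ∈ rᶜ := by rw [hc]; exact Finset.mem_insert_of_mem (Finset.mem_singleton_self b)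
    exact Finset.mem_compl.mp this
  set sa : {s : Finset (Fin (n - 1)) // s.card = n - 2} := ⟨insert a r, hsa⟩ with hsa'
  set sb : {s : Finset (Fin (n - 1)) // s.card = n - 2} := ⟨insert b r, hsb⟩ with hsb'
  have hsane : sa ≠ sb := by
    intro h
    have : insert a r = insert b r := congrArg Subtype.val h
    have hb : b ∈ insert a r := this ▸ Finset.mem_insert_self b r
    rcases Finset.mem_insert.mp hb with h' | h'
    · exact hab.ne' h'
    · exact hbr h'
  -- entries vanish away from sa, sb
  have hzero : ∀ s : {s : Finset (Fin (n - 1)) // s.card = n - 2},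
      s ∉ ({sa, sb} : Finset _) → obnd n q ⟨r, hr⟩ s * ψ s = 0 := by
    intro s hs
    have hns : ¬ r ⊆ s.1 := by
      intro hsub
      have hcard : (s.1 \ r).card = 1 := by
        rw [Finset.card_sdiff_of_subset hsub, s.2, hr]
        have h2 : r.card ≤ s.1.card := Finset.card_le_card hsub
        rw [s.2, hr] at h2
        omega
      obtain ⟨x, hx⟩ := Finset.card_eq_one.mp hcard
      have hxs : s.1 = insert x r := by
        rw [← Finset.union_sdiff_of_subset hsub, hx]
        ext w; simp [or_comm]
      have hxmem : x ∈ rᶜ := by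
        have hx' : x ∈ s.1 \ r := hx ▸ Finset.mem_singleton_self x
        exact Finset.mem_compl.mpr (Finset.mem_sdiff.mp hx').2
      rw [hc] at hxmem
      rcases Finset.mem_insert.mp hxmem with rfl | h'
      · exact hs (Finset.mem_insert.mpr (Or.inl (Subtype.ext hxs)))
      · rw [Finset.mem_singleton] at h'
        subst h'
        exact hs (Finset.mem_insert.mpr (Or.inr (Finset.mem_singleton.mpr (Subtype.ext hxs))))
    have : obnd n q ⟨r, hr⟩ s = 0 := by
      simp [obnd, cbnd, csign, if_neg hns]
    rw [this, zero_mul]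
  have hmv : (obnd n q).mulVec ψ ⟨r, hr⟩ =
      obnd n q ⟨r, hr⟩ sa * ψ sa + obnd n q ⟨r, hr⟩ sb * ψ sb := by
    rw [Matrix.mulVec, dotProduct]
    rw [← Finset.sum_subset (Finset.subset_univ ({sa, sb} : Finset _))
      (fun s _ hs => hzero s hs)]
    exact Finset.sum_pair hsane
  -- complements of the two facets
  have hsaC : (insert a r)ᶜ = {b} := by
    rw [Finset.compl_insert, hc, Finset.erase_insert (by simp [hab.ne])]
  have hsbC : (insert b r)ᶜ = {a} := by
    rw [Finset.compl_insert, hc, Finset.pair_comm, Finset.erase_insert (by simp [hab.ne'])]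
  -- filter counts
  have hfa : ((rᶜ).filter (fun w => w < a)).card = 0 := by
    rw [hc]
    rw [Finset.filter_insert, if_neg (lt_irrefl a), Finset.filter_singleton,
      if_neg (not_lt.mpr hab.le), Finset.card_empty]
  have hfb : ((rᶜ).filter (fun w => w < b)).card = 1 := by
    rw [hc]
    rw [Finset.filter_insert, if_pos hab, Finset.filter_singleton,
      if_neg (lt_irrefl b), Finset.card_insert_of_notMem (Finset.notMem_empty a),
      Finset.card_empty]
  have hpa : (r.filter (fun w => w < a)).card = (a : ℕ) := by
    have := aux_pos r a; omega
  have hpb : (r.filter (fun w => w < b)).card + 1 = (b : ℕ) := by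
    have := aux_pos r b; omega
  -- entry values
  have hea : (osign sa.1 * csign sa.1 r : ℤ) = (-1 : ℤ) ^ ((a : ℕ) + (b : ℕ)) := by
    rw [hsa', aux_osign hsaC, aux_csign har, hpa, pow_add, mul_comm]
  have heb : (osign sb.1 * csign sb.1 r : ℤ) = -(-1 : ℤ) ^ ((a : ℕ) + (b : ℕ)) := by
    rw [hsb', aux_osign hsbC, aux_csign hbr]
    have : (a : ℕ) + (b : ℕ) = ((a : ℕ) + (r.filter (fun w => w < b)).card) + 1 := by omega
    rw [this, pow_succ, pow_add]
    ring
  rw [hmv]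
  show ((osign sa.1 * cbnd (n-1) (n-2) ⟨r, hr⟩ sa : ℤ) : ZMod q) * ψ sa +
    ((osign sb.1 * cbnd (n-1) (n-2) ⟨r, hr⟩ sb : ℤ) : ZMod q) * ψ sb = _
  rw [show cbnd (n-1) (n-2) ⟨r, hr⟩ sa = csign sa.1 r from rfl,
    show cbnd (n-1) (n-2) ⟨r, hr⟩ sb = csign sb.1 r from rfl, hea, heb]
  push_cast
  ring

lemma stmt8_key' (n q : ℕ) (hq : 1 ≤ q)
    (ψ : {s : Finset (Fin (n - 1)) // s.card = n - 2} → ZMod q)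
    (r : Finset (Fin (n - 1))) (hr : r.card = n - 2 - 1)
    (a b : Fin (n - 1)) (hab : a < b) (hc : rᶜ = {a, b})
    (hsa : (insert a r).card = n - 2) (hsb : (insert b r).card = n - 2) :
    (obnd n q).mulVec ψ ⟨r, hr⟩ ≠ 0 ↔
      ψ ⟨insert a r, hsa⟩ ≠ ψ ⟨insert b r, hsb⟩ := by
  rw [stmt8_key n q ψ r hr a b hab hc hsa hsb]
  have hu : IsUnit (((-1 : ℤ) ^ ((a : ℕ) + (b : ℕ)) : ℤ) : ZMod q) := by
    push_cast
    exact (IsUnit.neg isUnit_one).pow _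
  rw [Ne, IsUnit.mul_right_eq_zero hu, sub_eq_zero]

lemma stmt8_prod (q : ℕ) (hq : 1 ≤ q) (m : ℕ) :
    (((q - 1).descFactorial m : ℕ) : ℤ) = ∏ i ∈ Finset.Icc 1 m, ((q : ℤ) - i) := by
  induction m with
  | zero => simp
  | succ m ih =>
    rw [Finset.prod_Icc_succ_top (by omega), ← ih, Nat.descFactorial_succ]
    rcases le_or_gt q m with h | h
    · have h1 : (q - 1).descFactorial m = 0 :=
        Nat.descFactorial_eq_zero_iff_lt.mpr (by omega)
      simp [h1]
    · have h2 : ((q - 1 - m : ℕ) : ℤ) = (q : ℤ) - (m + 1 : ℕ) := by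
        push_cast [Nat.cast_sub (by omega : 1 ≤ q), Nat.cast_sub (by omega : m ≤ q - 1)]
        omega
      push_cast
      push_cast at h2
      rw [h2]; ring


/-- Lemma 4.7: a vector `ψ ∈ ℤ_q^{n-1}` on the facets of
`K_{n-1}^{n-2}` is nowhere zero with `∂ψ` everywhere nonzero mod `q` iff its entries
are nonzero and pairwise distinct mod `q`; consequently the number of such `ψ` is
`(q-1)(q-2)⋯(q-(n-1))`. -/
theorem stmt8 (n q : ℕ) (hn : 3 ≤ n) (hq : 1 ≤ q) :
    (∀ ψ : {s : Finset (Fin (n - 1)) // s.card = n - 2} → ZMod q,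
      ((∀ s, ψ s ≠ 0) ∧ ∀ r, (obnd n q).mulVec ψ r ≠ 0) ↔
        ((∀ s, ψ s ≠ 0) ∧ Function.Injective ψ)) ∧
    (Nat.card {ψ : {s : Finset (Fin (n - 1)) // s.card = n - 2} → ZMod q //
        (∀ s, ψ s ≠ 0) ∧ ∀ r, (obnd n q).mulVec ψ r ≠ 0} : ℤ) =
      ∏ i ∈ Finset.Icc 1 (n - 1), ((q : ℤ) - i) := by
  haveI : NeZero q := ⟨by omega⟩
  have hcard : Fintype.card (Fin (n - 1)) = n - 1 := Fintype.card_fin _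
  have hiff : ∀ ψ : {s : Finset (Fin (n - 1)) // s.card = n - 2} → ZMod q,
      ((∀ s, ψ s ≠ 0) ∧ ∀ r, (obnd n q).mulVec ψ r ≠ 0) ↔
        ((∀ s, ψ s ≠ 0) ∧ Function.Injective ψ) := by
    intro ψ
    constructor
    · rintro ⟨h0, hb⟩
      refine ⟨h0, ?_⟩
      intro s t hst
      by_contra hne
      obtain ⟨x, hx⟩ := Finset.card_eq_one.mp
        (show (s.1ᶜ).card = 1 by rw [Finset.card_compl, s.2, hcard]; omega)
      obtain ⟨y, hy⟩ := Finset.card_eq_one.mp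
        (show (t.1ᶜ).card = 1 by rw [Finset.card_compl, t.2, hcard]; omega)
      have hxy : x ≠ y := by
        rintro rfl
        apply hne
        apply Subtype.ext
        calc s.1 = (s.1ᶜ)ᶜ := (compl_compl _).symm
          _ = ({x} : Finset (Fin (n-1)))ᶜ := by rw [hx]
          _ = (t.1ᶜ)ᶜ := by rw [hy]
          _ = t.1 := compl_compl _
      set r := s.1 ∩ t.1 with hrdef
      have hrc : rᶜ = {x, y} := by
        rw [hrdef, Finset.compl_inter, hx, hy, ← Finset.insert_eq]
      have hr : r.card = n - 2 - 1 := by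
        have h1 := Finset.card_add_card_compl r
        rw [hrc, hcard, Finset.card_pair hxy] at h1
        omega
      have hys : insert y r = s.1 := by
        ext w
        simp only [Finset.mem_insert, hrdef, Finset.mem_inter]
        constructor
        · rintro (rfl | ⟨hw, _⟩)
          · by_contra hws
            have : w ∈ s.1ᶜ := Finset.mem_compl.mpr hws
            rw [hx, Finset.mem_singleton] at this
            exact hxy this.symm
          · exact hw
        · intro hw
          by_cases hwy : w = y
          · exact Or.inl hwy
          · refine Or.inr ⟨hw, ?_⟩
            by_contra hwt
            have : w ∈ t.1ᶜ := Finset.mem_compl.mpr hwt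
            rw [hy, Finset.mem_singleton] at this
            exact hwy this
      have hxt : insert x r = t.1 := by
        ext w
        simp only [Finset.mem_insert, hrdef, Finset.mem_inter]
        constructor
        · rintro (rfl | ⟨_, hw⟩)
          · by_contra hwt
            have : w ∈ t.1ᶜ := Finset.mem_compl.mpr hwt
            rw [hy, Finset.mem_singleton] at this
            exact hxy this
          · exact hw
        · intro hw
          by_cases hwx : w = x
          · exact Or.inl hwx
          · refine Or.inr ⟨?_, hw⟩
            by_contra hws
            have : w ∈ s.1ᶜ := Finset.mem_compl.mpr hws
            rw [hx, Finset.mem_singleton] at this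
            exact hwx this
      rcases hxy.lt_or_gt with h | h
      · have key := stmt8_key' n q hq ψ r hr x y h hrc (hxt ▸ t.2) (hys ▸ s.2)
        exact (key.mp (hb ⟨r, hr⟩))
          (by rw [show (⟨insert x r, hxt ▸ t.2⟩ : {s : Finset (Fin (n-1)) // s.card = n - 2}) = t
                    from Subtype.ext hxt,
                  show (⟨insert y r, hys ▸ s.2⟩ : {s : Finset (Fin (n-1)) // s.card = n - 2}) = s
                    from Subtype.ext hys, hst])
      · have hrc' : rᶜ = {y, x} := by rw [hrc, Finset.pair_comm]
        have key := stmt8_key' n q hq ψ r hr y x h hrc' (hys ▸ s.2) (hxt ▸ t.2)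
        exact (key.mp (hb ⟨r, hr⟩))
          (by rw [show (⟨insert y r, hys ▸ s.2⟩ : {s : Finset (Fin (n-1)) // s.card = n - 2}) = s
                    from Subtype.ext hys,
                  show (⟨insert x r, hxt ▸ t.2⟩ : {s : Finset (Fin (n-1)) // s.card = n - 2}) = t
                    from Subtype.ext hxt, hst])
    · rintro ⟨h0, hinj⟩
      refine ⟨h0, ?_⟩
      rintro ⟨r, hr⟩
      obtain ⟨x, y, hxy, hc⟩ := Finset.card_eq_two.mp
        (show (rᶜ).card = 2 by rw [Finset.card_compl, hr, hcard]; omega)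
      have hxr : x ∉ r := Finset.mem_compl.mp (hc ▸ Finset.mem_insert_self x {y})
      have hyr : y ∉ r := Finset.mem_compl.mp
        (hc ▸ Finset.mem_insert_of_mem (Finset.mem_singleton_self y))
      have hsx : (insert x r).card = n - 2 := by
        rw [Finset.card_insert_of_notMem hxr, hr]; omega
      have hsy : (insert y r).card = n - 2 := by
        rw [Finset.card_insert_of_notMem hyr, hr]; omega
      have hne : (⟨insert x r, hsx⟩ : {s : Finset (Fin (n-1)) // s.card = n - 2}) ≠
          ⟨insert y r, hsy⟩ := by
        intro h
        have h' : insert x r = insert y r := congrArg Subtype.val h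
        have : x ∈ insert y r := h' ▸ Finset.mem_insert_self x r
        rcases Finset.mem_insert.mp this with h'' | h''
        · exact hxy h''
        · exact hxr h''
      rcases hxy.lt_or_gt with h | h
      · exact (stmt8_key' n q hq ψ r hr x y h hc hsx hsy).mpr
          (fun heq => hne (hinj heq))
      · have hc' : rᶜ = {y, x} := by rw [hc, Finset.pair_comm]
        exact (stmt8_key' n q hq ψ r hr y x h hc' hsy hsx).mpr
          (fun heq => hne.symm (hinj heq))
  refine ⟨hiff, ?_⟩
  let e2 : {ψ : {s : Finset (Fin (n - 1)) // s.card = n - 2} → ZMod q //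
        (∀ s, ψ s ≠ 0) ∧ Function.Injective ψ} ≃
      ({s : Finset (Fin (n - 1)) // s.card = n - 2} ↪ {x : ZMod q // x ≠ 0}) :=
    { toFun := fun ψ => ⟨fun s => ⟨ψ.1 s, ψ.2.1 s⟩,
        fun s t h => ψ.2.2 (congrArg Subtype.val h)⟩,
      invFun := fun f => ⟨fun s => (f s).1,
        ⟨fun s => (f s).2, fun s t h => f.injective (Subtype.ext h)⟩⟩,
      left_inv := fun ψ => rfl,
      right_inv := fun f => rfl }
  have hc1 : Fintype.card {x : ZMod q // x ≠ 0} = q - 1 := by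
    rw [Fintype.card_subtype_compl, Fintype.card_subtype_eq, ZMod.card]
  have hc2 : Fintype.card {s : Finset (Fin (n - 1)) // s.card = n - 2} = n - 1 := by
    rw [Fintype.card_finset_len, hcard]
    rw [show n - 2 = (n - 1) - 1 by omega, Nat.choose_symm (by omega), Nat.choose_one_right]
  rw [Nat.card_congr ((Equiv.subtypeEquivRight hiff).trans e2), Nat.card_eq_fintype_card,
    Fintype.card_embedding_eq, hc1, hc2, stmt8_prod q hq (n - 1)]
end

section
/- If Δ is a bridgeless simplicial complex (no facet is a coloop of the simplicial matroid), then Φ_Δ(q) ≠ 0 for some q; that is, Δ admits a nowhere-zero modular q-flow. -/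
open Matrix

/-- Rank over `ℚ` of an integer matrix. -/
noncomputable def rankQ {a b : Type} [Fintype a] [Fintype b] (M : Matrix a b ℤ) : ℕ :=
  (M.map ((↑) : ℤ → ℚ)).rank

/-- Submatrix on the columns indexed by `X`. -/
def colsub {a b : Type} (M : Matrix a b ℤ) (X : Finset b) : Matrix a X ℤ :=
  M.submatrix id (fun x => x.1)

/-- `β_d(X)`: the top Betti number of the subcomplex `X ∪ Δ_{d-1}`. -/
noncomputable def betaTop {m : ℕ} (K : Finset (Finset (Fin m))) (d : ℕ)
    (X : Finset {s : Finset (Fin m) // s ∈ K ∧ s.card = d + 1}) : ℤ :=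
  (X.card : ℤ) - rankQ (colsub (kbnd K (d + 1)) X)

/-- `β_{d-1}(X)`: the codimension-one Betti number of the subcomplex `X ∪ Δ_{d-1}`,
namely `dim ker ∂_{d-1} − rank ∂_X` over `ℚ`. -/
noncomputable def betaLow {m : ℕ} (K : Finset (Finset (Fin m))) (d : ℕ)
    (X : Finset {s : Finset (Fin m) // s ∈ K ∧ s.card = d + 1}) : ℤ :=
  ((Fintype.card {s : Finset (Fin m) // s ∈ K ∧ s.card = d} : ℤ) - rankQ (kbnd K d))
    - rankQ (colsub (kbnd K (d + 1)) X)

/-- `f` is a coloop (bridge) of the simplicial matroid: its column of the top boundary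
map does not lie in the span of the other columns. -/
def IsColoop {m : ℕ} (K : Finset (Finset (Fin m))) (d : ℕ)
    (f : {s : Finset (Fin m) // s ∈ K ∧ s.card = d + 1}) : Prop :=
  (fun r => ((kbnd K (d + 1)) r f : ℚ)) ∉
    Submodule.span ℚ
      ((fun g => fun r => ((kbnd K (d + 1)) r g : ℚ)) '' {g | g ≠ f})

/-- From a matrix all of whose columns lie in the span of the other columns (over ℚ),
produce a nowhere-zero integer kernel vector. -/
lemma exists_nowhere_zero_int_kernel {R F : Type} [Fintype R] [Fintype F] [DecidableEq F]
    (M : Matrix R F ℤ)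
    (h : ∀ f : F, (fun r => (M r f : ℚ)) ∈ Submodule.span ℚ
      ((fun g => fun r => (M r g : ℚ)) '' {g | g ≠ f})) :
    ∃ x : F → ℤ, M.mulVec x = 0 ∧ ∀ f, x f ≠ 0 := by
  classical
  -- the ℚ-kernel of M
  set W : Submodule ℚ (F → ℚ) :=
    LinearMap.ker (Matrix.mulVecLin (M.map (Int.cast : ℤ → ℚ))) with hW
  -- for each f, a kernel vector nonzero at f
  have key : ∀ f : F, ∃ v : F → ℚ, v ∈ W ∧ v f ≠ 0 := by
    intro f
    have hf := h f
    rw [Set.image_eq_range] at hf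
    rw [Submodule.mem_span_range_iff_exists_fun] at hf
    obtain ⟨c, hc⟩ := hf
    set v : F → ℚ := fun g => if hg : g = f then -1 else c ⟨g, hg⟩ with hvdef
    refine ⟨v, ?_, by simp [hvdef]⟩
    rw [LinearMap.mem_ker]
    funext r
    have hcr := congrFun hc r
    simp only [Finset.sum_apply, Pi.smul_apply, smul_eq_mul] at hcr
    have h1 : ∑ x : ↑{g | g ≠ f}, c x * (M r x.1 : ℚ)
        = ∑ x : ↑{g | g ≠ f}, (fun g => (M r g : ℚ) * v g) x.1 :=
      Finset.sum_congr rfl (fun x _ => by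
        simp only [hvdef, dif_neg x.2]; rw [mul_comm])
    rw [h1, Finset.sum_set_coe (f := fun g => (M r g : ℚ) * v g)] at hcr
    have h2 : ({g : F | g ≠ f}).toFinset = Finset.univ.erase f := by
      ext g; simp [Finset.mem_erase]
    rw [h2] at hcr
    simp only [Matrix.mulVecLin_apply, Matrix.mulVec, dotProduct,
      Matrix.map_apply, Pi.zero_apply]
    rw [← Finset.add_sum_erase _ (fun g => (M r g : ℚ) * v g) (Finset.mem_univ f), hcr,
      hvdef]
    simp
  -- proper hyperplanes of W
  set U : F → Subspace ℚ W := fun f =>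
    LinearMap.ker ((LinearMap.proj f).comp W.subtype) with hU
  have hne : ∀ f, U f ≠ ⊤ := by
    intro f heq
    obtain ⟨v, hv, hvf⟩ := key f
    have : (⟨v, hv⟩ : W) ∈ U f := heq ▸ Submodule.mem_top
    rw [hU, LinearMap.mem_ker] at this
    exact hvf this
  have hcov : (⋃ f, ((U f : Subspace ℚ W) : Set W)) ≠ Set.univ := by
    intro heq
    obtain ⟨f, hf⟩ := Subspace.exists_eq_top_of_iUnion_eq_univ heq
    exact hne f hf
  obtain ⟨w, hw⟩ := Set.ne_univ_iff_exists_notMem _ |>.mp hcov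
  simp only [Set.mem_iUnion, not_exists, SetLike.mem_coe, hU, LinearMap.mem_ker,
    LinearMap.comp_apply, Submodule.subtype_apply, LinearMap.proj_apply] at hw
  -- now w : W with w.1 nowhere zero; clear denominators
  set v : F → ℚ := w.1 with hv
  have hker : (M.map (Int.cast : ℤ → ℚ)).mulVec v = 0 := w.2
  refine ⟨fun g => (v g).num * ∏ h ∈ Finset.univ.erase g, ((v h).den : ℤ), ?_, ?_⟩
  · funext r
    have hcast : ((M.mulVec (fun g => (v g).num * ∏ h ∈ Finset.univ.erase g, ((v h).den : ℤ)) r : ℤ) : ℚ)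
        = ((M.map (Int.cast : ℤ → ℚ)).mulVec v r) * ∏ h : F, ((v h).den : ℚ) := by
      simp only [Matrix.mulVec, dotProduct, Matrix.map_apply]
      push_cast
      rw [Finset.sum_mul]
      apply Finset.sum_congr rfl
      intro g _
      have h1 : (v g) * ((v g).den : ℚ) = ((v g).num : ℚ) := Rat.mul_den_eq_num _
      have h2 : ((v g).num : ℚ) * ∏ h ∈ Finset.univ.erase g, ((v h).den : ℚ)
          = v g * ∏ h : F, ((v h).den : ℚ) := by
        rw [← Finset.mul_prod_erase Finset.univ (fun h => ((v h).den : ℚ))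
          (Finset.mem_univ g), ← h1]
        ring
      linear_combination (M r g : ℚ) * h2
    rw [hker] at hcast
    simp only [Pi.zero_apply, zero_mul] at hcast
    exact_mod_cast hcast
  · intro f
    apply mul_ne_zero
    · exact Rat.num_ne_zero.mpr (hw f)
    · apply Finset.prod_ne_zero_iff.mpr
      intro h _
      exact_mod_cast (v h).den_nz


/-- Corollary 5.5: if the `d`-dimensional simplicial complex `Δ` is
bridgeless (no facet is a coloop of the simplicial matroid), then `Φ_Δ(q) ≠ 0` for some
`q`, i.e. `Δ` admits a nowhere-zero modular `q`-flow. -/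
theorem stmt10 {m : ℕ} (K : Finset (Finset (Fin m))) (d : ℕ)
    (hK : ∀ s ∈ K, ∀ t ⊆ s, t ∈ K)
    (hbridgeless : ∀ f, ¬ IsColoop K d f) :
    ∃ q : ℕ, 0 < q ∧ kFlowCount K d q ≠ 0 := by
  classical
  obtain ⟨x, hx0, hxne⟩ := exists_nowhere_zero_int_kernel (kbnd K (d + 1))
    (fun f => not_not.mp (hbridgeless f))
  set q : ℕ := (Finset.univ.sup fun g => (x g).natAbs) + 1 with hq
  refine ⟨q, Nat.succ_pos _, ?_⟩
  haveI : NeZero q := ⟨Nat.succ_ne_zero _⟩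
  set φ : {s : Finset (Fin m) // s ∈ K ∧ s.card = d + 1} → ZMod q :=
    fun s => ((x s : ℤ) : ZMod q) with hφ
  have hflow : ((kbnd K (d + 1)).map (Int.cast : ℤ → ZMod q)).mulVec φ = 0 := by
    funext r
    have h0 := congrFun hx0 r
    simp only [Matrix.mulVec, dotProduct, Pi.zero_apply] at h0 ⊢
    have : ((∑ g, kbnd K (d + 1) r g * x g : ℤ) : ZMod q)
        = ∑ g, ((kbnd K (d + 1)).map (Int.cast : ℤ → ZMod q)) r g * φ g := by
      push_cast
      exact Finset.sum_congr rfl (fun g _ => rfl)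
    rw [← this, h0, Int.cast_zero]
  have hnz : ∀ s, φ s ≠ 0 := by
    intro s h0
    rw [hφ] at h0
    rw [ZMod.intCast_zmod_eq_zero_iff_dvd] at h0
    have hlt : |x s| < (q : ℤ) := by
      rw [Int.abs_eq_natAbs, hq]
      exact_mod_cast Nat.lt_succ_of_le (Finset.le_sup (f := fun g => (x g).natAbs) (Finset.mem_univ s))
    exact hxne s (Int.eq_zero_of_abs_lt_dvd h0 hlt)
  rw [kFlowCount]
  have : Nonempty {φ : {s : Finset (Fin m) // s ∈ K ∧ s.card = d + 1} → ZMod q //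
      ((kbnd K (d + 1)).map (Int.cast : ℤ → ZMod q)).mulVec φ = 0 ∧ ∀ s, φ s ≠ 0} :=
    ⟨⟨φ, hflow, hnz⟩⟩
  exact Nat.card_pos.ne'
end

section
/- For every dimension d, there exists a bridgeless d-dimensional simplicial complex with no nowhere-zero modular q-flow for any q ≤ d+2; namely, the complete complex K_{d+3}^{d+1} works, so κ(d) > d+2. -/
open Matrix

/-- `f` is a coloop (bridge) of the column matroid of `M` over `ℚ`: the column of `f`
is not in the span of the other columns. -/
def MatColoop {R F : Type} [Fintype R] [Fintype F] (M : Matrix R F ℤ) (f : F) : Prop :=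
  (fun r => (M r f : ℚ)) ∉
    Submodule.span ℚ ((fun g => fun r => (M r g : ℚ)) '' {g | g ≠ f})


section
variable {M : Type} [CommRing M] {n k : ℕ}

/-- if-then-else extension of φ to all finsets -/
def Phi (k : ℕ) (φ : {s : Finset (Fin n) // s.card = k} → M) (s : Finset (Fin n)) : M :=
  if h : s.card = k then φ ⟨s, h⟩ else 0

lemma card_filter_lt (x : Fin n) : (Finset.univ.filter (fun y => y < x)).card = x.val := by
  have : Finset.univ.filter (fun y => y < x) = Finset.Iio x := by
    ext y; simp
  rw [this, Fin.card_Iio]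

lemma sum_csign_mul (r : Finset (Fin n)) (hr : r.card + 1 = k)
    (φ : {s : Finset (Fin n) // s.card = k} → M) :
    ∑ s : {s : Finset (Fin n) // s.card = k}, ((csign s.1 r : ℤ) : M) * φ s
      = ∑ x ∈ rᶜ, ((-1 : M) ^ ((r.filter (fun y => y < x)).card)) * Phi k φ (insert x r) := by
  classical
  have h1 : ∑ s : {s : Finset (Fin n) // s.card = k}, ((csign s.1 r : ℤ) : M) * φ s
      = ∑ s ∈ Finset.univ.filter (fun s : Finset (Fin n) => s.card = k),
          ((csign s r : ℤ) : M) * Phi k φ s := by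
    rw [Finset.sum_subtype (p := fun s : Finset (Fin n) => s.card = k)
      (Finset.univ.filter (fun s : Finset (Fin n) => s.card = k))
      (by intro x; simp) (fun s => ((csign s r : ℤ) : M) * Phi k φ s)]
    refine Finset.sum_congr rfl ?_
    rintro ⟨s, hs⟩ _
    simp [Phi, hs]
  rw [h1]
  have h2 : ∑ s ∈ Finset.univ.filter (fun s : Finset (Fin n) => s.card = k),
          ((csign s r : ℤ) : M) * Phi k φ s
      = ∑ s ∈ (Finset.univ.filter (fun s : Finset (Fin n) => s.card = k)).filter
          (fun s => r ⊆ s), ((csign s r : ℤ) : M) * Phi k φ s := by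
    refine (Finset.sum_subset (Finset.filter_subset _ _) ?_).symm
    intro s hs hns
    simp only [Finset.mem_filter, Finset.mem_univ, true_and] at hs hns
    have : ¬ r ⊆ s := fun h => hns ⟨hs, h⟩
    simp [csign, this]
  rw [h2]
  have h3 : (Finset.univ.filter (fun s : Finset (Fin n) => s.card = k)).filter
      (fun s => r ⊆ s) = rᶜ.image (fun x => insert x r) := by
    ext s
    simp only [Finset.mem_filter, Finset.mem_univ, true_and, Finset.mem_image,
      Finset.mem_compl]
    constructor
    · rintro ⟨hcard, hsub⟩
      have hd : (s \ r).card = 1 := by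
        rw [Finset.card_sdiff_of_subset hsub]; omega
      obtain ⟨x, hx⟩ := Finset.card_eq_one.mp hd
      have hxmem : x ∈ s \ r := by rw [hx]; exact Finset.mem_singleton_self x
      refine ⟨x, (Finset.mem_sdiff.mp hxmem).2, ?_⟩
      apply Finset.Subset.antisymm
      · intro y hy
        rcases Finset.mem_insert.mp hy with h | h
        · exact h ▸ (Finset.mem_sdiff.mp hxmem).1
        · exact hsub h
      · intro y hy
        by_cases hyr : y ∈ r
        · exact Finset.mem_insert_of_mem hyr
        · have : y ∈ s \ r := Finset.mem_sdiff.mpr ⟨hy, hyr⟩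
          rw [hx] at this
          simp only [Finset.mem_singleton] at this
          exact this ▸ Finset.mem_insert_self _ _
    · rintro ⟨x, hx, rfl⟩
      exact ⟨by rw [Finset.card_insert_of_notMem hx]; omega,
        Finset.subset_insert _ _⟩
      
  rw [h3, Finset.sum_image (by
    intro x hx y hy hxy
    simp only [Finset.coe_compl, Set.mem_compl_iff, Finset.mem_coe, Finset.mem_compl] at hx hy
    have : x ∈ insert y r := (show insert x r = insert y r from hxy) ▸ Finset.mem_insert_self x r
    rcases Finset.mem_insert.mp this with h | h
    · exact h
    · exact absurd h hx)]
  refine Finset.sum_congr rfl ?_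
  intro x hx
  have hxr : x ∉ r := Finset.mem_compl.mp hx
  have hsub : r ⊆ insert x r := Finset.subset_insert _ _
  have hsd : insert x r \ r = {x} := by
    ext y
    simp only [Finset.mem_sdiff, Finset.mem_insert, Finset.mem_singleton]
    constructor
    · rintro ⟨h | h, hyr⟩
      · exact h
      · exact absurd h hyr
    · rintro rfl; exact ⟨Or.inl rfl, hxr⟩
  have hfilt : (insert x r).filter (fun w => w < x) = r.filter (fun y => y < x) := by
    rw [Finset.filter_insert, if_neg (lt_irrefl x)]
  rw [csign, if_pos hsub, hsd, Finset.sum_singleton, hfilt]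
  push_cast
  ring
end

section
variable {M : Type} [CommRing M] {n : ℕ}

lemma neg_one_pow_mul_self (m : ℕ) (c : M) : (-1 : M) ^ m * ((-1) ^ m * c) = c := by
  rw [← mul_assoc, ← pow_add]
  rw [Even.neg_one_pow ⟨m, rfl⟩, one_mul]

lemma neg_one_pow_mul_ne_zero (m : ℕ) {c : M} (h : (-1 : M) ^ m * c ≠ 0) : c ≠ 0 := by
  rintro rfl; exact h (mul_zero _)

lemma neg_one_pow_mul_eq_zero (m : ℕ) {c : M} (h : (-1 : M) ^ m * c = 0) : c = 0 := by
  have := congrArg (fun t => (-1 : M) ^ m * t) h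
  simpa [neg_one_pow_mul_self] using this

variable (u v w : Fin n) (huv : u < v) (hvw : v < w)

lemma compl_filter_u (huv : u < v) (huw : u < w) :
    ((({u, v, w} : Finset (Fin n))ᶜ).filter (fun y => y < u)).card = u.val := by
  have : (({u, v, w} : Finset (Fin n))ᶜ).filter (fun y => y < u)
      = Finset.univ.filter (fun y => y < u) := by
    ext y
    simp only [Finset.mem_filter, Finset.mem_compl, Finset.mem_insert,
      Finset.mem_singleton, Finset.mem_univ, true_and]
    constructor
    · exact fun h => h.2
    · intro hy
      refine ⟨fun h => ?_, hy⟩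
      rcases h with rfl | rfl | rfl
      · exact absurd hy (lt_irrefl _)
      · exact absurd (hy.trans huv) (lt_irrefl _)
      · exact absurd (hy.trans huw) (lt_irrefl _)
  rw [this, card_filter_lt]

lemma compl_filter_v (huv : u < v) (hvw : v < w) :
    ((({u, v, w} : Finset (Fin n))ᶜ).filter (fun y => y < v)).card + 1 = v.val := by
  have he : (({u, v, w} : Finset (Fin n))ᶜ).filter (fun y => y < v)
      = (Finset.univ.filter (fun y => y < v)) \ {u} := by
    ext y
    simp only [Finset.mem_filter, Finset.mem_compl, Finset.mem_insert,
      Finset.mem_singleton, Finset.mem_univ, true_and, Finset.mem_sdiff]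
    constructor
    · intro ⟨h1, h2⟩; exact ⟨h2, fun h => h1 (Or.inl h)⟩
    · intro ⟨h1, h2⟩
      refine ⟨fun h => ?_, h1⟩
      rcases h with rfl | rfl | rfl
      · exact h2 rfl
      · exact absurd h1 (lt_irrefl _)
      · exact absurd (h1.trans hvw) (lt_irrefl _)
  rw [he, Finset.card_sdiff_of_subset (by
    intro y hy
    simp only [Finset.mem_singleton] at hy
    subst hy
    simp [huv]), card_filter_lt, Finset.card_singleton]
  have : 1 ≤ v.val := by
    have := huv
    omega
  omega

lemma compl_filter_w (huv : u < v) (hvw : v < w) :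
    ((({u, v, w} : Finset (Fin n))ᶜ).filter (fun y => y < w)).card + 2 = w.val := by
  have he : (({u, v, w} : Finset (Fin n))ᶜ).filter (fun y => y < w)
      = (Finset.univ.filter (fun y => y < w)) \ {u, v} := by
    ext y
    simp only [Finset.mem_filter, Finset.mem_compl, Finset.mem_insert,
      Finset.mem_singleton, Finset.mem_univ, true_and, Finset.mem_sdiff]
    constructor
    · intro ⟨h1, h2⟩
      exact ⟨h2, fun h => h1 (by tauto)⟩
    · intro ⟨h1, h2⟩
      refine ⟨fun h => ?_, h1⟩
      rcases h with rfl | rfl | rfl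
      · exact h2 (Or.inl rfl)
      · exact h2 (Or.inr rfl)
      · exact absurd h1 (lt_irrefl _)
  have huvw : u < w := huv.trans hvw
  rw [he, Finset.card_sdiff_of_subset (by
    intro y hy
    simp only [Finset.mem_insert, Finset.mem_singleton] at hy
    rcases hy with rfl | rfl
    · simp [huvw]
    · simp [hvw]), card_filter_lt, Finset.card_insert_of_notMem (by simp [huv.ne]),
    Finset.card_singleton]
  have h1 : u.val < v.val := huv
  have h2 : v.val < w.val := hvw
  omega

lemma insert_compl_triple (hvw' : u ∉ ({v, w} : Finset (Fin n)))
    (hmem : u ∈ ({u, v, w} : Finset (Fin n))) :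
    insert u (({u, v, w} : Finset (Fin n))ᶜ) = ({v, w} : Finset (Fin n))ᶜ := by
  ext y
  simp only [Finset.mem_insert, Finset.mem_compl, Finset.mem_singleton,
    Finset.mem_insert] at *
  constructor
  · rintro (rfl | h)
    · exact fun h => hvw' (by simpa using h)
    · intro hy
      exact h (by rcases (by simpa using hy : y = v ∨ y = w) with rfl | rfl <;> simp)
  · intro hy
    by_cases hu : y = u
    · exact Or.inl hu
    · refine Or.inr fun h => ?_
      rcases (by simpa using h : y = u ∨ y = v ∨ y = w) with rfl | rfl | rfl
      · exact hu rfl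
      · exact hy (by simp)
      · exact hy (by simp)
end

section
variable {M : Type} [CommRing M] (d : ℕ)

abbrev Colt (d : ℕ) := {s : Finset (Fin (d + 3)) // s.card = d + 1}

lemma triple_card {n : ℕ} {u v w : Fin n} (huv : u < v) (hvw : v < w) :
    ({u, v, w} : Finset (Fin n)).card = 3 := by
  rw [Finset.card_insert_of_notMem (by simp [huv.ne, (huv.trans hvw).ne]),
    Finset.card_insert_of_notMem (by simp [hvw.ne]), Finset.card_singleton]

lemma triple_compl_card {u v w : Fin (d + 3)} (huv : u < v) (hvw : v < w) :
    (({u, v, w} : Finset (Fin (d + 3)))ᶜ).card = d := by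
  rw [Finset.card_compl, triple_card huv hvw]
  simp

lemma pair_card {n : ℕ} {u v : Fin n} (huv : u ≠ v) :
    ({u, v} : Finset (Fin n)).card = 2 := by
  rw [Finset.card_insert_of_notMem (by simp [huv]), Finset.card_singleton]

lemma pair_compl_card {u v : Fin (d + 3)} (huv : u ≠ v) :
    (({u, v} : Finset (Fin (d + 3)))ᶜ).card = d + 1 := by
  rw [Finset.card_compl, pair_card huv]
  simp

lemma row_eq (φ : Colt d → M) (u v w : Fin (d + 3)) (huv : u < v) (hvw : v < w) :
    ∑ s : Colt d, ((csign s.1 (({u, v, w} : Finset (Fin (d + 3)))ᶜ) : ℤ) : M) * φ s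
      = (-1 : M) ^ (u.val + v.val + w.val) *
        ((-1 : M) ^ (v.val + w.val) * Phi (d + 1) φ (({v, w} : Finset (Fin (d + 3)))ᶜ)
          - (-1 : M) ^ (u.val + w.val) * Phi (d + 1) φ (({u, w} : Finset (Fin (d + 3)))ᶜ)
          + (-1 : M) ^ (u.val + v.val) * Phi (d + 1) φ (({u, v} : Finset (Fin (d + 3)))ᶜ)) := by
  have huw : u < w := huv.trans hvw
  set r : Finset (Fin (d + 3)) := ({u, v, w} : Finset (Fin (d + 3)))ᶜ with hrdef
  have hrc : r.card + 1 = d + 1 := by rw [triple_compl_card d huv hvw]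
  rw [sum_csign_mul r hrc φ, hrdef, compl_compl]
  rw [Finset.sum_insert (by simp [huv.ne, huw.ne]),
    Finset.sum_insert (by simp [hvw.ne]), Finset.sum_singleton]
  -- rewrite the three inserts
  have e1 : insert u (({u, v, w} : Finset (Fin (d + 3)))ᶜ) = ({v, w} : Finset (Fin (d + 3)))ᶜ :=
    insert_compl_triple u v w (by simp [huv.ne, huw.ne]) (by simp)
  have e2 : insert v (({u, v, w} : Finset (Fin (d + 3)))ᶜ) = ({u, w} : Finset (Fin (d + 3)))ᶜ := by
    have hperm : ({u, v, w} : Finset (Fin (d + 3))) = {v, u, w} := Finset.insert_comm u v {w}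
    rw [hperm]
    exact insert_compl_triple v u w (by simp [huv.ne', hvw.ne]) (by simp)
  have e3 : insert w (({u, v, w} : Finset (Fin (d + 3)))ᶜ) = ({u, v} : Finset (Fin (d + 3)))ᶜ := by
    have hperm : ({u, v, w} : Finset (Fin (d + 3))) = {w, u, v} := by
      ext y; simp; tauto
    rw [hperm]
    exact insert_compl_triple w u v (by simp [huw.ne', hvw.ne']) (by simp)
  rw [e1, e2, e3]
  -- signs
  obtain ⟨b, hb⟩ : ∃ b, b + 1 = v.val := ⟨_, compl_filter_v u v w huv hvw⟩
  obtain ⟨c, hc⟩ : ∃ c, c + 2 = w.val := ⟨_, compl_filter_w u v w huv hvw⟩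
  rw [compl_filter_u u v w huv huw]
  rw [show ((({u, v, w} : Finset (Fin (d + 3)))ᶜ).filter (fun y => y < v)).card = b from by
      have := compl_filter_v u v w huv hvw; omega]
  rw [show ((({u, v, w} : Finset (Fin (d + 3)))ᶜ).filter (fun y => y < w)).card = c from by
      have := compl_filter_w u v w huv hvw; omega]
  rw [← hb, ← hc]
  set A : M := (-1 : M) ^ u.val with hA
  set B : M := (-1 : M) ^ b with hB
  set C : M := (-1 : M) ^ c with hC
  have hA2 : A * A = 1 := by rw [hA, ← pow_add]; exact Even.neg_one_pow ⟨u.val, rfl⟩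
  have hB2 : B * B = 1 := by rw [hB, ← pow_add]; exact Even.neg_one_pow ⟨b, rfl⟩
  have hC2 : C * C = 1 := by rw [hC, ← pow_add]; exact Even.neg_one_pow ⟨c, rfl⟩
  set x := Phi (d + 1) φ (({v, w} : Finset (Fin (d + 3)))ᶜ)
  set y := Phi (d + 1) φ (({u, w} : Finset (Fin (d + 3)))ᶜ)
  set z := Phi (d + 1) φ (({u, v} : Finset (Fin (d + 3)))ᶜ)
  have hpow : ∀ m l : ℕ, (-1 : M) ^ (m + l) = (-1) ^ m * (-1) ^ l := fun m l => pow_add _ _ _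
  rw [hpow u.val (b+1), hpow (u.val + (b+1)) (c+2), hpow (b+1) (c+2), hpow u.val (c+2),
    hpow b 1, hpow c 2]
  simp only [pow_one, pow_two, ← hA, ← hB, ← hC]
  linear_combination (-B*y - C*z) * hA2 + (-A*x - A*A*C*z) * hB2 + (-B*B*A*x - A*A*B*y) * hC2
end

section
variable {M : Type} [CommRing M] (d : ℕ)

lemma cocycle (φ : Colt d → M)
    (hflow : ∀ r : Finset (Fin (d + 3)), r.card + 1 = d + 1 →
      ∑ s : Colt d, ((csign s.1 r : ℤ) : M) * φ s = 0)
    (u v w : Fin (d + 3)) (huv : u < v) (hvw : v < w) :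
    (-1 : M) ^ (v.val + w.val) * Phi (d + 1) φ (({v, w} : Finset (Fin (d + 3)))ᶜ)
      - (-1 : M) ^ (u.val + w.val) * Phi (d + 1) φ (({u, w} : Finset (Fin (d + 3)))ᶜ)
      + (-1 : M) ^ (u.val + v.val) * Phi (d + 1) φ (({u, v} : Finset (Fin (d + 3)))ᶜ) = 0 := by
  have h := hflow (({u, v, w} : Finset (Fin (d + 3)))ᶜ)
    (by rw [triple_compl_card d huv hvw])
  rw [row_eq d φ u v w huv hvw] at h
  exact neg_one_pow_mul_eq_zero _ h

lemma part2 (q : ℕ) (hq1 : 1 ≤ q) (hq2 : q ≤ d + 2) :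
    mFlowCount (cbnd (d + 3) (d + 1)) q = 0 := by
  haveI : NeZero q := ⟨by omega⟩
  rw [mFlowCount]
  have hemp : IsEmpty {φ : Colt d → ZMod q //
      ((cbnd (d + 3) (d + 1)).map (Int.cast : ℤ → ZMod q)).mulVec φ = 0 ∧ ∀ f, φ f ≠ 0} := by
    constructor
    rintro ⟨φ, hflow, hnz⟩
    have hrow : ∀ r : Finset (Fin (d + 3)), r.card + 1 = d + 1 →
        ∑ s : Colt d, ((csign s.1 r : ℤ) : ZMod q) * φ s = 0 := by
      intro r hr
      have hr' : r.card = (d + 1) - 1 := by omega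
      have h0 := congrFun hflow ⟨r, hr'⟩
      simpa [Matrix.mulVec, dotProduct, cbnd, Matrix.map_apply] using h0
    have hchi_ne : ∀ a b : Fin (d + 3), a ≠ b →
        (-1 : ZMod q) ^ (a.val + b.val) *
          Phi (d + 1) φ (({a, b} : Finset (Fin (d + 3)))ᶜ) ≠ 0 := by
      intro a b hab h
      have h2 := neg_one_pow_mul_eq_zero _ h
      rw [Phi, dif_pos (pair_compl_card d hab)] at h2
      exact hnz _ h2
    set g : Fin (d + 3) → ZMod q := fun x =>
      if h : (0 : Fin (d + 3)) < x then
        (-1 : ZMod q) ^ ((0 : Fin (d + 3)).val + x.val) *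
          Phi (d + 1) φ (({(0 : Fin (d + 3)), x} : Finset (Fin (d + 3)))ᶜ) else 0 with hg
    have hdiff : ∀ a b : Fin (d + 3), a < b → g b - g a ≠ 0 := by
      intro a b hab
      rcases eq_or_lt_of_le (Fin.zero_le a) with h0a | h0a
      · have ha : ¬ (0 : Fin (d + 3)) < a := by rw [← h0a]; exact lt_irrefl _
        have hb : (0 : Fin (d + 3)) < b := by rw [h0a]; exact hab
        rw [hg]
        simp only [dif_pos hb, dif_neg ha, sub_zero]
        rw [← h0a] at hab
        exact hchi_ne 0 b hab.ne
      · have hb : (0 : Fin (d + 3)) < b := h0a.trans hab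
        rw [hg]
        simp only [dif_pos hb, dif_pos h0a]
        have hc := cocycle d φ hrow 0 a b h0a hab
        intro hcontr
        exact hchi_ne a b hab.ne (by linear_combination hc + hcontr)
    have hinj : Function.Injective g := by
      intro a b hab
      by_contra hne
      rcases lt_or_gt_of_ne hne with h | h
      · exact hdiff a b h (by rw [hab, sub_self])
      · exact hdiff b a h (by rw [hab, sub_self])
    have hcard := Fintype.card_le_of_injective g hinj
    rw [Fintype.card_fin, ZMod.card] at hcard
    omega
  exact Nat.card_of_isEmpty
end

section
variable (d : ℕ)

def xflow (s : Colt d) : ℚ :=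
  (-1 : ℚ) ^ (∑ t ∈ s.1ᶜ, t.val) *
    (∑ t ∈ s.1ᶜ, (-1 : ℚ) ^ ((s.1ᶜ.filter (fun y => y < t)).card) * (t.val : ℚ))

lemma xflow_pair (u v : Fin (d + 3)) (huv : u < v) :
    Phi (d + 1) (xflow d) (({u, v} : Finset (Fin (d + 3)))ᶜ)
      = (-1 : ℚ) ^ (u.val + v.val) * ((u.val : ℚ) - (v.val : ℚ)) := by
  rw [Phi, dif_pos (pair_compl_card d huv.ne)]
  rw [xflow]
  simp only [compl_compl]
  have f1 : ({u, v} : Finset (Fin (d + 3))).filter (fun y => y < u) = ∅ := by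
    ext y
    simp only [Finset.mem_filter, Finset.mem_insert, Finset.mem_singleton,
      Finset.notMem_empty, iff_false, not_and]
    rintro (rfl | rfl)
    · exact lt_irrefl _
    · exact fun h => absurd (h.trans huv) (lt_irrefl _)
  have f2 : ({u, v} : Finset (Fin (d + 3))).filter (fun y => y < v) = {u} := by
    ext y
    simp only [Finset.mem_filter, Finset.mem_insert, Finset.mem_singleton]
    constructor
    · rintro ⟨rfl | rfl, h⟩
      · rfl
      · exact absurd h (lt_irrefl _)
    · rintro rfl; exact ⟨Or.inl rfl, huv⟩
  rw [Finset.sum_pair huv.ne, Finset.sum_pair huv.ne, f1, f2]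
  simp
  ring

lemma sort3 {n : ℕ} (a b c : Fin n) (hab : a ≠ b) (hac : a ≠ c)
    (hbc : b ≠ c) :
    ∃ u v w : Fin n, u < v ∧ v < w ∧ ({a, b, c} : Finset (Fin n)) = {u, v, w} := by
  rcases lt_or_gt_of_ne hab with h1 | h1 <;>
    rcases lt_or_gt_of_ne hac with h2 | h2 <;>
      rcases lt_or_gt_of_ne hbc with h3 | h3
  · exact ⟨a, b, c, h1, h3, rfl⟩
  · exact ⟨a, c, b, h2, h3, by ext x; simp; tauto⟩
  · exact absurd (h3.trans h2) (lt_asymm h1)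
  · exact ⟨c, a, b, h2, h1, by ext x; simp; tauto⟩
  · exact ⟨b, a, c, h1, h2, by ext x; simp; tauto⟩
  · exact absurd (h2.trans h3) (lt_asymm h1)
  · exact ⟨b, c, a, h3, h2, by ext x; simp; tauto⟩
  · exact ⟨c, b, a, h3, h1, by ext x; simp; tauto⟩

lemma xflow_rowsum (r : Finset (Fin (d + 3))) (hr : r.card + 1 = d + 1) :
    ∑ s : Colt d, ((csign s.1 r : ℤ) : ℚ) * xflow d s = 0 := by
  have hrc : rᶜ.card = 3 := by
    rw [Finset.card_compl]
    simp only [Fintype.card_fin]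
    omega
  obtain ⟨a, b, c, hab, hac, hbc, habc⟩ := Finset.card_eq_three.mp hrc
  obtain ⟨u, v, w, huv, hvw, hperm⟩ := sort3 a b c hab hac hbc
  have hreq : r = ({u, v, w} : Finset (Fin (d + 3)))ᶜ := by
    rw [← compl_compl r, habc, hperm]
  rw [hreq, row_eq d (xflow d) u v w huv hvw,
    xflow_pair d v w hvw, xflow_pair d u w (huv.trans hvw), xflow_pair d u v huv,
    neg_one_pow_mul_self, neg_one_pow_mul_self, neg_one_pow_mul_self]
  ring

lemma part1 (f : Colt d) : ¬ MatColoop (cbnd (d + 3) (d + 1)) f := by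
  intro hcol
  apply hcol
  -- column function
  set col : Colt d → ({r : Finset (Fin (d + 3)) // r.card = (d + 1) - 1} → ℚ) :=
    fun g => fun r => ((cbnd (d + 3) (d + 1) r g : ℤ) : ℚ) with hcoldef
  -- xflow f ≠ 0
  have hfc : f.1ᶜ.card = 2 := by
    rw [Finset.card_compl]
    simp only [Fintype.card_fin]
    omega
  obtain ⟨a, b, hab, habr⟩ := Finset.card_eq_two.mp hfc
  have hxf : xflow d f ≠ 0 := by
    obtain ⟨u, v, huv, hpair⟩ : ∃ u v : Fin (d + 3), u < v ∧ f.1ᶜ = {u, v} := by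
      rcases lt_or_gt_of_ne hab with h | h
      · exact ⟨a, b, h, habr⟩
      · exact ⟨b, a, h, by rw [habr, Finset.pair_comm]⟩
    have hf1 : f.1 = ({u, v} : Finset (Fin (d + 3)))ᶜ := by
      rw [← compl_compl f.1, hpair]
    have hfeq : f = ⟨({u, v} : Finset (Fin (d + 3)))ᶜ, pair_compl_card d huv.ne⟩ :=
      Subtype.ext hf1
    have := xflow_pair d u v huv
    rw [Phi, dif_pos (pair_compl_card d huv.ne)] at this
    rw [hfeq, this]
    have h1 : (u.val : ℚ) < (v.val : ℚ) := by exact_mod_cast huv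
    intro h0
    rcases mul_eq_zero.mp h0 with h | h
    · exact absurd h (pow_ne_zero _ (by norm_num))
    · linarith
  -- linear relation
  have hrel : ∑ g : Colt d, xflow d g • col g = 0 := by
    funext r
    simp only [Finset.sum_apply, Pi.smul_apply, smul_eq_mul, Pi.zero_apply, hcoldef]
    have := xflow_rowsum d r.1 (by have := r.2; omega)
    rw [← this]
    apply Finset.sum_congr rfl
    intro s _
    rw [cbnd]
    ring
  have hmem : col f ∈ Submodule.span ℚ
      ((fun g => fun r => ((cbnd (d + 3) (d + 1) r g : ℤ) : ℚ)) '' {g | g ≠ f}) := by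
    have hsplit : xflow d f • col f
        = - ∑ g ∈ Finset.univ.erase f, xflow d g • col g := by
      have := Finset.add_sum_erase Finset.univ (fun g => xflow d g • col g)
        (Finset.mem_univ f)
      rw [← this] at hrel
      linear_combination (norm := module) hrel
    have hmem2 : col f = (xflow d f)⁻¹ • (xflow d f • col f) := by
      rw [smul_smul, inv_mul_cancel₀ hxf, one_smul]
    rw [hmem2, hsplit]
    refine Submodule.smul_mem _ _ (Submodule.neg_mem _ (Submodule.sum_mem _ ?_))
    intro g hg
    refine Submodule.smul_mem _ _ (Submodule.subset_span ?_)
    exact ⟨g, Finset.ne_of_mem_erase hg, rfl⟩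
  exact hmem
end

/-- Theorem 1.3: for every dimension `d` there is a bridgeless
`d`-dimensional simplicial complex with no nowhere-zero modular `q`-flow for any
`q ≤ d+2`; namely the complete complex `K_{d+3}^{d+1}` works.  Hence `κ(d) > d+2`. -/
theorem stmt13 (d : ℕ) :
    (∀ f, ¬ MatColoop (cbnd (d + 3) (d + 1)) f) ∧
    (∀ q : ℕ, 1 ≤ q → q ≤ d + 2 → mFlowCount (cbnd (d + 3) (d + 1)) q = 0) :=
  ⟨fun f => part1 d f, fun q hq1 hq2 => part2 d q hq1 hq2⟩
end

section
/- If the flow quasipolynomial Φ_Δ(q) is a polynomial in q, then Φ_Δ(q) equals Bott's R polynomial R_Δ(q) = Σ_{X⊆F} (−1)^{|F|−|X|} q^{β_d(X)}; in general Φ_Δ(q) = Σ_{X⊆F} (−1)^{|F|−|X|} |ker ∂_X (mod q)|. -/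
open Matrix

/-- `|ker ∂_X (mod q)|`: the number of mod-`q` kernel vectors of the boundary matrix
restricted to the columns `X`. -/
noncomputable def kerCount {m : ℕ} (K : Finset (Finset (Fin m))) (d q : ℕ)
    (X : Finset {s : Finset (Fin m) // s ∈ K ∧ s.card = d + 1}) : ℕ :=
  Nat.card {φ : X → ZMod q //
    ((colsub (kbnd K (d + 1)) X).map (Int.cast : ℤ → ZMod q)).mulVec φ = 0}

/-! ### Auxiliary lemmas -/

open Finset

section IE
variable {a b : Type} [Fintype a] [Fintype b] [DecidableEq b]
variable {R : Type} [CommRing R] [Fintype R] [DecidableEq R]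

omit [Fintype a] [Fintype R] [DecidableEq R] in
lemma aux_mulVec_ext (M : Matrix a b R) (X : Finset b) (φ : X → R) :
    M.mulVec (fun s => if h : s ∈ X then φ ⟨s, h⟩ else 0)
      = (M.submatrix id (Subtype.val : X → b)).mulVec φ := by
  funext r
  simp only [mulVec, dotProduct, submatrix_apply, id_eq, mul_dite, mul_zero]
  rw [← Finset.sum_subset (Finset.subset_univ X) (fun x _ hx => dif_neg hx),
    Finset.sum_subtype X (fun x => Iff.rfl)
      (fun s => if h : s ∈ X then M r s * φ ⟨s, h⟩ else 0)]
  exact Finset.sum_congr rfl (fun i _ => by rw [dif_pos i.2])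

omit [Fintype a] [Fintype R] [DecidableEq R] in
lemma aux_count_ker_ext (M : Matrix a b R) (X : Finset b) :
    Nat.card {φ : X → R // (M.submatrix id (Subtype.val : X → b)).mulVec φ = 0}
      = Nat.card {ψ : b → R // M.mulVec ψ = 0 ∧ ∀ s ∉ X, ψ s = 0} := by
  apply Nat.card_congr
  refine ⟨fun φ => ⟨fun s => if h : s ∈ X then φ.1 ⟨s, h⟩ else 0,
      by rw [aux_mulVec_ext]; exact φ.2, fun s hs => dif_neg hs⟩,
    fun ψ => ⟨fun i => ψ.1 i.1, ?_⟩, ?_, ?_⟩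
  · have he : (fun s => if h : s ∈ X then ψ.1 (⟨s, h⟩ : X).1 else 0) = ψ.1 := by
      funext s
      by_cases h : s ∈ X
      · rw [dif_pos h]
      · rw [dif_neg h, ψ.2.2 s h]
    rw [← aux_mulVec_ext M X (fun i => ψ.1 i.1), he]
    exact ψ.2.1
  · intro φ
    ext i
    simp [i.2]
  · intro ψ
    ext s
    by_cases h : s ∈ X
    · simp [h]
    · simp [h, ψ.2.2 s h]

omit [Fintype a] [Fintype R] [DecidableEq R] in
lemma aux_supersets_sum (S : Finset b) :
    ∑ X : Finset b, (-1 : ℤ) ^ (Fintype.card b - X.card) * (if S ⊆ X then 1 else 0)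
      = if S = univ then 1 else 0 := by
  have h1 : ∀ X : Finset b, (-1 : ℤ) ^ (Fintype.card b - X.card) * (if S ⊆ X then 1 else 0)
      = if S ⊆ X then (-1 : ℤ) ^ (Fintype.card b - X.card) else 0 := by
    intro X; split <;> simp
  simp only [h1]
  rw [← Finset.sum_filter]
  rw [Finset.sum_nbij' (i := fun X => Xᶜ) (j := fun Y => Yᶜ)
    (t := Sᶜ.powerset) (g := fun Y => (-1 : ℤ) ^ Y.card)]
  · rw [Finset.sum_powerset_neg_one_pow_card]
    simp [Finset.compl_eq_empty_iff]
  · intro X hX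
    simp only [Finset.mem_filter] at hX
    simpa [Finset.mem_powerset] using Finset.compl_subset_compl.2 hX.2
  · intro Y hY
    simp only [Finset.mem_powerset] at hY
    simp only [Finset.mem_filter, Finset.mem_univ, true_and]
    have := Finset.compl_subset_compl.2 hY
    simpa using this
  · intro X hX; simp
  · intro Y hY; simp
  · intro X hX
    rw [Finset.card_compl]

lemma aux_IE (M : Matrix a b R) :
    (Nat.card {ψ : b → R // M.mulVec ψ = 0 ∧ ∀ s, ψ s ≠ 0} : ℤ)
      = ∑ X : Finset b, (-1 : ℤ) ^ (Fintype.card b - X.card)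
          * (Nat.card {ψ : b → R // M.mulVec ψ = 0 ∧ ∀ s ∉ X, ψ s = 0} : ℤ) := by
  classical
  have hc : ∀ X : Finset b, (Nat.card {ψ : b → R // M.mulVec ψ = 0 ∧ ∀ s ∉ X, ψ s = 0} : ℤ)
      = ∑ ψ ∈ univ.filter (fun ψ : b → R => M.mulVec ψ = 0),
          (if ∀ s ∉ X, ψ s = 0 then 1 else 0) := by
    intro X
    rw [Nat.card_eq_fintype_card, Fintype.card_subtype, Finset.sum_boole,
      Finset.filter_filter]
  simp only [hc, Finset.mul_sum]
  rw [Finset.sum_comm]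
  have hinner : ∀ ψ : b → R,
      ∑ X : Finset b, (-1 : ℤ) ^ (Fintype.card b - X.card) * (if ∀ s ∉ X, ψ s = 0 then 1 else 0)
        = if ∀ s, ψ s ≠ 0 then 1 else 0 := by
    intro ψ
    have h2 : ∀ X : Finset b, (∀ s ∉ X, ψ s = 0) ↔ (univ.filter (fun s => ψ s ≠ 0)) ⊆ X := by
      intro X
      constructor
      · intro h s hs
        simp only [Finset.mem_filter, Finset.mem_univ, true_and] at hs
        by_contra hsX
        exact hs (h s hsX)
      · intro h s hsX
        by_contra hne
        exact hsX (h (by simp [hne]))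
    have h3 : ∀ X : Finset b, (if ∀ s ∉ X, ψ s = 0 then (1:ℤ) else 0)
        = (if (univ.filter (fun s => ψ s ≠ 0)) ⊆ X then 1 else 0) :=
      fun X => if_congr (h2 X) rfl rfl
    simp only [h3]
    rw [aux_supersets_sum]
    congr 1
    simp only [eq_iff_iff, Finset.eq_univ_iff_forall, Finset.mem_filter, Finset.mem_univ, true_and]
  simp only [hinner]
  rw [Nat.card_eq_fintype_card, Fintype.card_subtype, Finset.sum_boole,
    Finset.filter_filter]
end IE

section RankMinor
variable {F : Type} [Field F]
variable {a b : Type} [Fintype a] [Fintype b]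

lemma aux_rank_sub_cols_le (A : Matrix a b F) {c : Type} [Fintype c] (g : c → b) :
    (A.submatrix id g).rank ≤ A.rank := by
  rw [rank_eq_finrank_span_cols, rank_eq_finrank_span_cols]
  have h : Set.range (A.submatrix id g)ᵀ ⊆ Set.range Aᵀ := by
    rintro _ ⟨i, rfl⟩; exact ⟨g i, rfl⟩
  exact Submodule.finrank_mono (Submodule.span_mono h)

lemma aux_rank_ge_of_minor (A : Matrix a b F) {r : ℕ} (f : Fin r → a) (g : Fin r → b)
    (h : IsUnit (A.submatrix f g).det) : r ≤ A.rank := by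
  have h1 : (A.submatrix f g).rank = r := by
    rw [rank_of_isUnit _ ((Matrix.isUnit_iff_isUnit_det _).2 h), Fintype.card_fin]
  have h2 : (A.submatrix f g) = (A.submatrix f id).submatrix id g := rfl
  have h3 : (A.submatrix f g).rank ≤ (A.submatrix f id).rank := by
    rw [h2]; exact aux_rank_sub_cols_le _ g
  have h4 : (A.submatrix f id).rank ≤ A.rank := by
    rw [← rank_transpose A, ← rank_transpose (A.submatrix f id)]
    exact aux_rank_sub_cols_le Aᵀ f
  omega

lemma aux_card_le_rank_of_indep_cols (A : Matrix a b F) {ι : Type} [Fintype ι]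
    (g : ι → b) (h : LinearIndependent F (fun i => Aᵀ (g i))) :
    Fintype.card ι ≤ A.rank := by
  have h2 : ((A.submatrix id g)ᵀ).rank = Fintype.card ι :=
    LinearIndependent.rank_matrix (M := (A.submatrix id g)ᵀ) h
  rw [← h2, rank_transpose]
  exact aux_rank_sub_cols_le A g

lemma aux_exists_indep_cols (A : Matrix a b F) :
    ∃ g : Fin A.rank → b, Function.Injective g ∧ LinearIndependent F (fun i => Aᵀ (g i)) := by
  classical
  obtain ⟨s, hs_sub, hspan, hli⟩ := exists_linearIndependent F (Set.range Aᵀ)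
  haveI : Fintype s := (Set.Finite.subset (Set.finite_range Aᵀ) hs_sub).fintype
  have hcard : Fintype.card s = A.rank := by
    rw [rank_eq_finrank_span_cols]
    change _ = Module.finrank F (Submodule.span F (Set.range Aᵀ))
    rw [← hspan, finrank_span_set_eq_card hli, Set.toFinset_card]
  have hidx : ∀ v : s, ∃ i : b, Aᵀ i = v.1 := fun v => hs_sub v.2
  choose idx hidx' using hidx
  let e : Fin A.rank ≃ s := (Fintype.equivFinOfCardEq hcard).symm
  refine ⟨fun i => idx (e i), ?_, ?_⟩
  · intro i j hij
    apply e.injective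
    apply Subtype.ext
    rw [← hidx' (e i), ← hidx' (e j)]
    exact congrArg Aᵀ hij
  · have : (fun i => Aᵀ (idx (e i))) = (fun i => (e i).1) := by
      funext i; exact hidx' (e i)
    rw [this]
    exact hli.comp e e.injective

lemma aux_exists_sq_minor (A : Matrix a b F) :
    ∃ (f : Fin A.rank → a) (g : Fin A.rank → b), IsUnit (A.submatrix f g).det := by
  classical
  obtain ⟨g, hginj, hg⟩ := aux_exists_indep_cols A
  set B := A.submatrix id g with hB
  have hBTrank : Bᵀ.rank = A.rank := by
    have h := LinearIndependent.rank_matrix (M := Bᵀ) (by exact hg)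
    rwa [Fintype.card_fin] at h
  obtain ⟨f', hf'inj, hf'⟩ := aux_exists_indep_cols Bᵀ
  let f : Fin A.rank → a := fun i => f' (Fin.cast hBTrank.symm i)
  refine ⟨f, g, ?_⟩
  have hrows : LinearIndependent F (fun i : Fin A.rank => B (f i)) :=
    hf'.comp (Fin.cast hBTrank.symm) (fun i j h => by
      simpa using congrArg (Fin.cast hBTrank) h)
  rw [← Matrix.isUnit_iff_isUnit_det, ← Matrix.linearIndependent_rows_iff_isUnit]
  exact hrows
end RankMinor

section IntRank
variable {a b : Type} [Fintype a] [Fintype b]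

lemma aux_indep_rat_of_indep_zmod {ι : Type} [Fintype ι] (w : ι → a → ℤ)
    (p : ℕ) (hp : p.Prime)
    (h : LinearIndependent (ZMod p) (fun i => fun j => ((w i j : ZMod p)))) :
    LinearIndependent ℚ (fun i => fun j => ((w i j : ℚ))) := by
  classical
  rw [Fintype.linearIndependent_iff] at h ⊢
  intro c hc
  by_contra hne
  push_neg at hne
  obtain ⟨i0, hi0⟩ := hne
  set d : ℤ := ∏ i : ι, ((c i).den : ℤ) with hd
  have hdne : d ≠ 0 := Finset.prod_ne_zero_iff.2 (fun i _ => by exact_mod_cast (c i).den_nz)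
  have hdvd : ∀ i : ι, ((c i).den : ℤ) ∣ d := fun i => Finset.dvd_prod_of_mem _ (mem_univ i)
  set z : ι → ℤ := fun i => (c i).num * (d / ((c i).den : ℤ)) with hz
  have hzq : ∀ i, ((z i : ℚ)) = c i * d := by
    intro i
    obtain ⟨e, he⟩ := hdvd i
    have hden : ((c i).den : ℤ) ≠ 0 := by exact_mod_cast (c i).den_nz
    rw [hz]
    simp only
    rw [he, Int.mul_ediv_cancel_left _ hden]
    push_cast
    have hnum : (c i) * ((c i).den : ℚ) = ((c i).num : ℚ) := Rat.mul_den_eq_num (c i)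
    rw [← mul_assoc, hnum]
  have hcomp : ∀ j : a, ∑ i : ι, c i * (w i j : ℚ) = 0 := by
    intro j
    have := congrFun hc j
    simpa [Finset.sum_apply] using this
  have hz0 : ∀ j : a, ∑ i : ι, z i * w i j = 0 := by
    intro j
    have hQ : ((∑ i : ι, z i * w i j : ℤ) : ℚ) = 0 := by
      push_cast
      calc ∑ i : ι, (z i : ℚ) * (w i j : ℚ)
          = ∑ i : ι, (c i * d) * (w i j : ℚ) := by
            exact Finset.sum_congr rfl (fun i _ => by rw [hzq i])
        _ = d * ∑ i : ι, c i * (w i j : ℚ) := by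
            rw [Finset.mul_sum]; exact Finset.sum_congr rfl (fun i _ => by ring)
        _ = 0 := by rw [hcomp j, mul_zero]
    exact_mod_cast hQ
  have hzi0 : z i0 ≠ 0 := by
    intro h0
    have : ((z i0 : ℚ)) = 0 := by exact_mod_cast h0
    rw [hzq i0] at this
    rcases mul_eq_zero.1 this with h1 | h2
    · exact hi0 h1
    · exact hdne (by exact_mod_cast h2)
  set g0 : ℤ := univ.gcd z with hg0def
  set u : ι → ℤ := fun i => z i / g0 with hu
  have hgcd1 : univ.gcd u = 1 := Finset.gcd_div_eq_one (mem_univ i0) hzi0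
  have hg0 : g0 ≠ 0 := fun h0 => hzi0 (Finset.gcd_eq_zero_iff.1 h0 i0 (mem_univ i0))
  have hzu : ∀ i, z i = g0 * u i := fun i =>
    (Int.mul_ediv_cancel' (Finset.gcd_dvd (mem_univ i))).symm
  have hu0 : ∀ j : a, ∑ i : ι, u i * w i j = 0 := by
    intro j
    have : g0 * ∑ i : ι, u i * w i j = 0 := by
      rw [Finset.mul_sum]
      rw [← hz0 j]
      exact Finset.sum_congr rfl (fun i _ => by rw [hzu i]; ring)
    exact (mul_eq_zero.1 this).resolve_left hg0
  have hmodp : ∀ i, ((u i : ZMod p)) = 0 := by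
    apply h (fun i => ((u i : ZMod p)))
    funext j
    have h5 := hu0 j
    have h6 : ((∑ i : ι, u i * w i j : ℤ) : ZMod p) = 0 := by rw [h5]; simp
    push_cast at h6
    simpa [Finset.sum_apply] using h6
  have hdvdall : (p : ℤ) ∣ univ.gcd u :=
    Finset.dvd_gcd (fun i _ => (ZMod.intCast_zmod_eq_zero_iff_dvd _ _).1 (hmodp i))
  rw [hgcd1] at hdvdall
  have h7 := Int.le_of_dvd one_pos hdvdall
  have h8 := hp.two_le
  omega

lemma aux_rank_mod_p (N : Matrix a b ℤ) :
    ∃ D : ℤ, D ≠ 0 ∧ ∀ p : ℕ, p.Prime → ¬ ((p : ℤ) ∣ D) →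
      (N.map ((↑) : ℤ → ZMod p)).rank = (N.map ((↑) : ℤ → ℚ)).rank := by
  obtain ⟨f, g, hdet⟩ := aux_exists_sq_minor (N.map ((↑) : ℤ → ℚ))
  have h1 : ((N.map ((↑) : ℤ → ℚ)).submatrix f g).det
      = (((N.submatrix f g).det : ℤ) : ℚ) := by
    have h0 : (N.map ((↑) : ℤ → ℚ)).submatrix f g
        = (N.submatrix f g).map ((↑) : ℤ → ℚ) := rfl
    rw [h0]
    exact (RingHom.map_det (Int.castRingHom ℚ) (N.submatrix f g)).symm
  refine ⟨(N.submatrix f g).det, ?_, ?_⟩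
  · intro h0
    rw [h1, h0] at hdet
    exact not_isUnit_zero (by exact_mod_cast hdet)
  · intro p hp hpd
    haveI : Fact p.Prime := ⟨hp⟩
    apply le_antisymm
    · obtain ⟨g', hg'inj, hg'⟩ := aux_exists_indep_cols (N.map ((↑) : ℤ → ZMod p))
      have hQ := aux_indep_rat_of_indep_zmod (fun i j => N j (g' i)) p hp hg'
      have hQ' : LinearIndependent ℚ (fun i => (N.map ((↑) : ℤ → ℚ))ᵀ (g' i)) := hQ
      have := aux_card_le_rank_of_indep_cols (N.map ((↑) : ℤ → ℚ)) g' hQ'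
      rwa [Fintype.card_fin] at this
    · apply aux_rank_ge_of_minor (N.map ((↑) : ℤ → ZMod p)) f g
      have h2 : ((N.map ((↑) : ℤ → ZMod p)).submatrix f g).det
          = (((N.submatrix f g).det : ℤ) : ZMod p) := by
        have h0 : (N.map ((↑) : ℤ → ZMod p)).submatrix f g
            = (N.submatrix f g).map ((↑) : ℤ → ZMod p) := rfl
        rw [h0]
        exact (RingHom.map_det (Int.castRingHom (ZMod p)) (N.submatrix f g)).symm
      rw [h2, isUnit_iff_ne_zero, Ne, ZMod.intCast_zmod_eq_zero_iff_dvd]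
      exact hpd

lemma aux_count_ker_field [DecidableEq b] (p : ℕ) [Fact p.Prime] (N : Matrix a b (ZMod p)) :
    Nat.card {φ : b → ZMod p // N.mulVec φ = 0} = p ^ (Fintype.card b - N.rank) := by
  classical
  have he : {φ : b → ZMod p // N.mulVec φ = 0} ≃ LinearMap.ker N.mulVecLin :=
    Equiv.subtypeEquivRight (fun φ => by simp [LinearMap.mem_ker])
  rw [Nat.card_congr he]
  haveI : Fintype ↥(LinearMap.ker N.mulVecLin) := Fintype.ofFinite _
  rw [Nat.card_eq_fintype_card, Module.card_eq_pow_finrank (K := ZMod p), ZMod.card]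
  congr 1
  have hfin := LinearMap.finrank_range_add_finrank_ker (N.mulVecLin)
  rw [Module.finrank_fintype_fun_eq_card] at hfin
  have hr : N.rank = Module.finrank (ZMod p) (LinearMap.range N.mulVecLin) := rfl
  omega
end IntRank

lemma aux_part1 {m : ℕ} (K : Finset (Finset (Fin m))) (d : ℕ) (q : ℕ) (hq : 0 < q) :
    (kFlowCount K d q : ℤ) =
      ∑ X : Finset {s : Finset (Fin m) // s ∈ K ∧ s.card = d + 1},
        (-1 : ℤ) ^ (Fintype.card {s : Finset (Fin m) // s ∈ K ∧ s.card = d + 1}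
            - X.card) * (kerCount K d q X : ℤ) := by
  haveI : NeZero q := ⟨hq.ne'⟩
  rw [kFlowCount, aux_IE]
  apply Finset.sum_congr rfl
  intro X _
  congr 2
  rw [kerCount]
  rw [show (colsub (kbnd K (d+1)) X).map (Int.cast : ℤ → ZMod q)
      = ((kbnd K (d+1)).map (Int.cast : ℤ → ZMod q)).submatrix id
          (Subtype.val : X → _) from rfl]
  rw [aux_count_ker_ext]

/-- Proposition 3.15 and Corollary 3.6: in general
`Φ_Δ(q) = ∑_{X ⊆ F} (−1)^{|F|−|X|} |ker ∂_X (mod q)|`, and if `Φ_Δ(q)` is a polynomial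
in `q` then `Φ_Δ(q)` equals Bott's polynomial
`R_Δ(q) = ∑_{X ⊆ F} (−1)^{|F|−|X|} q^{β_d(X)}`. -/
theorem stmt19 {m : ℕ} (K : Finset (Finset (Fin m))) (d : ℕ)
    (hK : ∀ s ∈ K, ∀ t ⊆ s, t ∈ K) :
    (∀ q : ℕ, 0 < q →
      (kFlowCount K d q : ℤ) =
        ∑ X : Finset {s : Finset (Fin m) // s ∈ K ∧ s.card = d + 1},
          (-1 : ℤ) ^ (Fintype.card {s : Finset (Fin m) // s ∈ K ∧ s.card = d + 1}
              - X.card) * (kerCount K d q X : ℤ)) ∧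
    ((∃ p : Polynomial ℤ, ∀ q : ℕ, 0 < q → (kFlowCount K d q : ℤ) = p.eval (q : ℤ)) →
      ∀ q : ℕ, 0 < q →
        (kFlowCount K d q : ℤ) =
          ∑ X : Finset {s : Finset (Fin m) // s ∈ K ∧ s.card = d + 1},
            (-1 : ℤ) ^ (Fintype.card {s : Finset (Fin m) // s ∈ K ∧ s.card = d + 1}
                - X.card) * (q : ℤ) ^ (X.card - rankQ (colsub (kbnd K (d + 1)) X))) := by
  classical
  refine ⟨fun q hq => aux_part1 K d q hq, ?_⟩
  rintro ⟨P, hP⟩ q hq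
  set Fc := {s : Finset (Fin m) // s ∈ K ∧ s.card = d + 1} with hFc
  set n := Fintype.card Fc with hn
  set eX : Finset Fc → ℕ := fun X => X.card - rankQ (colsub (kbnd K (d + 1)) X) with heX
  set PR : Polynomial ℤ :=
    ∑ X : Finset Fc, Polynomial.C ((-1 : ℤ) ^ (n - X.card)) * Polynomial.X ^ (eX X) with hPR
  have hPReval : ∀ t : ℤ, PR.eval t
      = ∑ X : Finset Fc, (-1 : ℤ) ^ (n - X.card) * t ^ (eX X) := by
    intro t
    rw [hPR, Polynomial.eval_finset_sum]
    simp
  have hD : ∀ X : Finset Fc, ∃ D : ℤ, D ≠ 0 ∧ ∀ p : ℕ, p.Prime → ¬ ((p : ℤ) ∣ D) →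
      ((colsub (kbnd K (d + 1)) X).map ((↑) : ℤ → ZMod p)).rank
        = rankQ (colsub (kbnd K (d + 1)) X) := by
    intro X
    obtain ⟨D, hD0, hDp⟩ := aux_rank_mod_p (colsub (kbnd K (d + 1)) X)
    exact ⟨D, hD0, fun p hp hpd => hDp p hp hpd⟩
  choose D hD0 hDp using hD
  set Dt : ℤ := ∏ X : Finset Fc, D X with hDt
  have hDt0 : Dt ≠ 0 := Finset.prod_ne_zero_iff.2 (fun X _ => hD0 X)
  have key : ∀ p : ℕ, p.Prime → ¬ ((p : ℤ) ∣ Dt) → (kFlowCount K d p : ℤ) = PR.eval (p : ℤ) := by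
    intro p hp hpd
    haveI : Fact p.Prime := ⟨hp⟩
    rw [aux_part1 K d p hp.pos, hPReval]
    apply Finset.sum_congr rfl
    intro X _
    congr 1
    have hpdX : ¬ ((p : ℤ) ∣ D X) := fun h =>
      hpd (h.trans (Finset.dvd_prod_of_mem D (Finset.mem_univ X)))
    have h1 : kerCount K d p X = p ^ (eX X) := by
      rw [kerCount]
      have h2 := aux_count_ker_field p ((colsub (kbnd K (d + 1)) X).map ((↑) : ℤ → ZMod p))
      rw [show ((↑) : ℤ → ZMod p) = (Int.cast : ℤ → ZMod p) from rfl] at h2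
      rw [h2, hDp X p hp hpdX, heX]
      congr 2
      exact Fintype.card_coe X
    rw [h1]
    push_cast
    rfl
  have hPeq : P = PR := by
    by_contra hne
    have hfin : {x : ℤ | (P - PR).IsRoot x}.Finite :=
      Polynomial.finite_setOf_isRoot (sub_ne_zero.2 hne)
    obtain ⟨B, hB⟩ := hfin.bddAbove
    obtain ⟨p, hpge, hp⟩ := Nat.exists_infinite_primes (max (B.toNat + 1) (Dt.natAbs + 1))
    have hpd : ¬ ((p : ℤ) ∣ Dt) := by
      intro hdvd
      have h1 : p ∣ Dt.natAbs := by
        have := Int.natAbs_dvd_natAbs.2 hdvd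
        simpa using this
      have h2 : p ≤ Dt.natAbs := Nat.le_of_dvd (Int.natAbs_pos.2 hDt0) h1
      have h3 : Dt.natAbs + 1 ≤ p := le_trans (le_max_right _ _) hpge
      omega
    have hroot : (P - PR).IsRoot (p : ℤ) := by
      have h2 := key p hp hpd
      have h3 := hP p hp.pos
      simp only [Polynomial.IsRoot, Polynomial.eval_sub]
      rw [← h3, ← h2]
      ring
    have h4 : (p : ℤ) ≤ B := hB hroot
    have h5 : (B.toNat + 1 : ℕ) ≤ p := le_trans (le_max_left _ _) hpge
    have h6 : B ≤ (B.toNat : ℤ) := Int.self_le_toNat B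
    have h7 : ((B.toNat + 1 : ℕ) : ℤ) ≤ (p : ℤ) := by exact_mod_cast h5
    push_cast at h7
    omega
  rw [hP q hq, hPeq, hPReval]
end
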